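/- arXiv:2306.10784 — 4 statements merged into one kernel-verified Lean document; each statement's English description precedes it below -/
import Mathlib

section
/- If D1 and D2 are digraphs and D is an Ore-composition of D1 and D2, then T(D) ≥ T(D1) + T(D2) - 2. Moreover, if D1 or D2 is isomorphic to the bidirected K4, then T(D) ≥ T(D1) + T(D2) - 1. -/
/-- A (finite) digraph on vertices drawn from `ℕ`. -/
structure Dgr where
  verts : Finset ℕ
  Adj : ℕ → ℕ → Prop
  adj_mem : ∀ ⦃u v : ℕ⦄, Adj u v → u ∈ verts ∧ v ∈ verts
  adj_irrefl : ∀ v, ¬ Adj v v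

namespace Dgr

/-- number of vertices -/
def nV (D : Dgr) : ℕ := D.verts.card

/-- number of arcs -/
noncomputable def nA (D : Dgr) : ℕ := {p : ℕ × ℕ | D.Adj p.1 p.2}.ncard

/-- subdigraph relation -/
def Subd (H D : Dgr) : Prop := H.verts ⊆ D.verts ∧ ∀ ⦃u v : ℕ⦄, H.Adj u v → D.Adj u v

def ProperSubd (H D : Dgr) : Prop := Subd H D ∧ ¬ Subd D H

/-- a relation is acyclic: no directed cycle through any vertex -/
def Acy (R : ℕ → ℕ → Prop) : Prop := ∀ v, ¬ Relation.TransGen R v v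

/-- a `k`-dicolouring: each colour class induces an acyclic subdigraph -/
def IsDicol (D : Dgr) {k : ℕ} (φ : ℕ → Fin k) : Prop :=
  Acy (fun u v => D.Adj u v ∧ φ u = φ v)

def Dicolourable (D : Dgr) (k : ℕ) : Prop := ∃ φ : ℕ → Fin k, D.IsDicol φ

/-- the dichromatic number -/
noncomputable def dichr (D : Dgr) : ℕ := sInf {k | D.Dicolourable k}

/-- `k`-dicritical digraphs -/
def Dicritical (k : ℕ) (D : Dgr) : Prop :=
  D.dichr = k ∧ ∀ H : Dgr, ProperSubd H D → H.dichr < k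

def Bidirected (D : Dgr) : Prop := ∀ ⦃u v : ℕ⦄, D.Adj u v → D.Adj v u

def Oriented (D : Dgr) : Prop := ∀ ⦃u v : ℕ⦄, D.Adj u v → ¬ D.Adj v u

/-- being a bidirected complete digraph on `n` vertices -/
def IsBidirComplete (n : ℕ) (D : Dgr) : Prop :=
  D.verts.card = n ∧ ∀ u ∈ D.verts, ∀ v ∈ D.verts, u ≠ v → D.Adj u v

/-- a packing of digons (2-sets) and bidirected triangles (3-sets) -/
def IsPacking (D : Dgr) (P : Finset (Finset ℕ)) : Prop :=
  (∀ s ∈ P, (s.card = 2 ∨ s.card = 3) ∧ s ⊆ D.verts ∧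
      ∀ u ∈ s, ∀ v ∈ s, u ≠ v → D.Adj u v) ∧
  (P : Set (Finset ℕ)).Pairwise Disjoint

/-- `T(D)`: the maximum of `d + 2t` over packings of `d` digons and `t` bidirected
triangles; a digon contributes `card - 1 = 1`, a triangle `card - 1 = 2`. -/
noncomputable def TT (D : Dgr) : ℕ :=
  sSup {t | ∃ P : Finset (Finset ℕ), D.IsPacking P ∧ t = ∑ s ∈ P, (s.card - 1)}

/-- vertex deletion -/
def del (D : Dgr) (x : ℕ) : Dgr where
  verts := D.verts.erase x
  Adj u v := D.Adj u v ∧ u ≠ x ∧ v ≠ x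
  adj_mem := by
    intro u v h
    exact ⟨Finset.mem_erase.2 ⟨h.2.1, (D.adj_mem h.1).1⟩,
           Finset.mem_erase.2 ⟨h.2.2, (D.adj_mem h.1).2⟩⟩
  adj_irrefl := fun v h => D.adj_irrefl v h.1

/-- induced subdigraph on a set `S` of vertices -/
def induce (D : Dgr) (S : Finset ℕ) : Dgr where
  verts := D.verts ∩ S
  Adj u v := D.Adj u v ∧ u ∈ S ∧ v ∈ S
  adj_mem := by
    intro u v h
    exact ⟨Finset.mem_inter.2 ⟨(D.adj_mem h.1).1, h.2.1⟩,
           Finset.mem_inter.2 ⟨(D.adj_mem h.1).2, h.2.2⟩⟩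
  adj_irrefl := fun v h => D.adj_irrefl v h.1

/-- adding a digon between two (distinct, existing) vertices -/
def addDigon (D : Dgr) (x y : ℕ) : Dgr where
  verts := D.verts
  Adj u v := D.Adj u v ∨
    (x ≠ y ∧ x ∈ D.verts ∧ y ∈ D.verts ∧ ((u = x ∧ v = y) ∨ (u = y ∧ v = x)))
  adj_mem := by
    intro u v h
    rcases h with h | ⟨_, hx, hy, h | h⟩
    · exact D.adj_mem h
    · exact ⟨h.1 ▸ hx, h.2 ▸ hy⟩
    · exact ⟨h.1 ▸ hy, h.2 ▸ hx⟩
  adj_irrefl := by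
    intro v h
    rcases h with h | ⟨hxy, _, _, h | h⟩
    · exact D.adj_irrefl v h
    · exact hxy (h.1.symm.trans h.2)
    · exact hxy (h.2.symm.trans h.1)

/-- removing the digon `[x,y]` (both arcs) -/
def delDigon (D : Dgr) (x y : ℕ) : Dgr where
  verts := D.verts
  Adj u v := D.Adj u v ∧ ¬(u = x ∧ v = y) ∧ ¬(u = y ∧ v = x)
  adj_mem := by intro u v h; exact D.adj_mem h.1
  adj_irrefl := fun v h => D.adj_irrefl v h.1

/-- `D` is an Ore-composition of `D1` (digon side, replaced digon `[x,y]`) and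
`D2` (split side, split vertex `z`). -/
def IsOreComp (D1 D2 D : Dgr) : Prop :=
  Bidirected D1 ∧ Bidirected D2 ∧ Disjoint D1.verts D2.verts ∧
  ∃ (x y z : ℕ) (Z1 Z2 : Set ℕ),
    x ∈ D1.verts ∧ y ∈ D1.verts ∧ x ≠ y ∧ D1.Adj x y ∧
    z ∈ D2.verts ∧
    Z1 ∪ Z2 = {w | D2.Adj z w} ∧ Disjoint Z1 Z2 ∧ Z1.Nonempty ∧ Z2.Nonempty ∧
    D.verts = D1.verts ∪ D2.verts.erase z ∧
    (∀ u v, D.Adj u v ↔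
      (D1.Adj u v ∧ ¬(u = x ∧ v = y) ∧ ¬(u = y ∧ v = x)) ∨
      (D2.Adj u v ∧ u ≠ z ∧ v ≠ z) ∨
      (u = x ∧ v ∈ Z1 ∧ D2.Adj z v) ∨ (v = x ∧ u ∈ Z1 ∧ D2.Adj u z) ∨
      (u = y ∧ v ∈ Z2 ∧ D2.Adj z v) ∨ (v = y ∧ u ∈ Z2 ∧ D2.Adj u z))

/-- degree of a vertex: in-degree plus out-degree -/
noncomputable def deg (D : Dgr) (v : ℕ) : ℕ :=
  {u | D.Adj v u}.ncard + {u | D.Adj u v}.ncard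

end Dgr

open Dgr

/-- the class of 4-Ore digraphs -/
inductive IsOre4 : Dgr → Prop
  | k4 : ∀ D : Dgr, IsBidirComplete 4 D → IsOre4 D
  | comp : ∀ D1 D2 D : Dgr, IsOre4 D1 → IsOre4 D2 → IsOreComp D1 D2 D → IsOre4 D

namespace Dgr

/-- an emerald: a bidirected triangle all of whose vertices have degree 6 in `D` -/
def IsEmerald (D : Dgr) (s : Finset ℕ) : Prop :=
  s.card = 3 ∧ s ⊆ D.verts ∧ (∀ u ∈ s, ∀ v ∈ s, u ≠ v → D.Adj u v) ∧
  ∀ v ∈ s, D.deg v = 6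

/-- a diamond: a bidirected `K4` minus a digon `[x,y]`, the two other vertices
having degree 6 in `D` -/
def IsDiamond (D : Dgr) (s : Finset ℕ) : Prop :=
  s.card = 4 ∧ s ⊆ D.verts ∧ ∃ x ∈ s, ∃ y ∈ s, x ≠ y ∧
    (∀ u ∈ s, ∀ v ∈ s, u ≠ v → ¬(u = x ∧ v = y) → ¬(u = y ∧ v = x) → D.Adj u v) ∧
    (∀ v ∈ s, v ≠ x → v ≠ y → D.deg v = 6)

/-- boundary of an induced subdigraph given by its vertex set `S` -/
def bdry (D : Dgr) (S : Finset ℕ) : Set ℕ :=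
  {v | v ∈ S ∧ ∃ u ∈ D.verts, u ∉ S ∧ (D.Adj u v ∨ D.Adj v u)}

/-- Ore-collapsible induced subdigraph, given by its vertex set -/
def OreCollapsible (D : Dgr) (S : Finset ℕ) : Prop :=
  S ⊆ D.verts ∧ S.card < D.verts.card ∧
  ∃ u v : ℕ, u ≠ v ∧ D.bdry S = {u, v} ∧ IsOre4 ((D.induce S).addDigon u v)

/-- the potential of a digraph, with respect to parameters ε and δ -/
noncomputable def pot (D : Dgr) (ε δ : ℝ) : ℝ :=
  (10/3 + ε) * (D.nV : ℝ) - (D.nA : ℝ) - δ * (D.TT : ℝ)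

end Dgr

namespace OreHelpers

open Dgr

lemma sum_card_le {D : Dgr} {P : Finset (Finset ℕ)} (h : D.IsPacking P) :
    ∑ s ∈ P, s.card ≤ D.verts.card := by
  have hd : ∀ x ∈ P, ∀ y ∈ P, x ≠ y → Disjoint (id x) (id y) := by
    intro s hs t ht hst
    exact h.2 (Finset.mem_coe.2 hs) (Finset.mem_coe.2 ht) hst
  calc ∑ s ∈ P, s.card = (P.biUnion id).card := (Finset.card_biUnion hd).symm
    _ ≤ D.verts.card := by
        apply Finset.card_le_card
        intro v hv
        obtain ⟨s, hs, hvs⟩ := Finset.mem_biUnion.1 hv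
        exact (h.1 s hs).2.1 hvs

lemma sum_le_card {D : Dgr} {P : Finset (Finset ℕ)} (h : D.IsPacking P) :
    ∑ s ∈ P, (s.card - 1) ≤ D.verts.card :=
  le_trans (Finset.sum_le_sum fun s _ => Nat.sub_le _ _) (sum_card_le h)

lemma packing_empty (D : Dgr) : D.IsPacking ∅ := by
  constructor
  · intro s hs; simp at hs
  · simp

lemma le_TT {D : Dgr} {P : Finset (Finset ℕ)} (h : D.IsPacking P) :
    ∑ s ∈ P, (s.card - 1) ≤ D.TT :=
  le_csSup ⟨D.verts.card, by rintro t ⟨Q, hQ, rfl⟩; exact sum_le_card hQ⟩ ⟨P, h, rfl⟩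

lemma TT_exists (D : Dgr) :
    ∃ P : Finset (Finset ℕ), D.IsPacking P ∧ D.TT = ∑ s ∈ P, (s.card - 1) := by
  have hne : {t | ∃ P : Finset (Finset ℕ), D.IsPacking P ∧ t = ∑ s ∈ P, (s.card - 1)}.Nonempty :=
    ⟨0, Set.mem_setOf.2 ⟨∅, packing_empty D, by simp⟩⟩
  have hbdd : BddAbove {t | ∃ P : Finset (Finset ℕ), D.IsPacking P ∧ t = ∑ s ∈ P, (s.card - 1)} :=
    ⟨D.verts.card, by rintro t ⟨Q, hQ, rfl⟩; exact sum_le_card hQ⟩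
  exact Nat.sSup_mem hne hbdd

lemma TT_le_two {D : Dgr} (h4 : D.verts.card = 4) : D.TT ≤ 2 := by
  apply csSup_le ⟨0, Set.mem_setOf.2 ⟨∅, packing_empty D, by simp⟩⟩
  rintro t ⟨P, hP, rfl⟩
  have h1 : ∀ s ∈ P, 3 * (s.card - 1) ≤ 2 * s.card := by
    intro s hs
    rcases (hP.1 s hs).1 with h | h <;> omega
  have h2 : ∑ s ∈ P, s.card ≤ 4 := h4 ▸ sum_card_le hP
  have h3 : 3 * ∑ s ∈ P, (s.card - 1) ≤ 2 * ∑ s ∈ P, s.card := by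
    rw [Finset.mul_sum, Finset.mul_sum]
    exact Finset.sum_le_sum h1
  omega

lemma packing_union {D : Dgr} {P Q : Finset (Finset ℕ)} (hP : D.IsPacking P)
    (hQ : D.IsPacking Q) (hd : ∀ s ∈ P, ∀ t ∈ Q, Disjoint s t) :
    D.IsPacking (P ∪ Q) ∧
      ∑ s ∈ P ∪ Q, (s.card - 1) = (∑ s ∈ P, (s.card - 1)) + ∑ s ∈ Q, (s.card - 1) := by
  have hPQ : Disjoint P Q := by
    rw [Finset.disjoint_left]
    intro s hsP hsQ
    have h1 := hd s hsP s hsQ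
    rw [disjoint_self, Finset.bot_eq_empty] at h1
    rcases (hP.1 s hsP).1 with h | h <;> rw [h1] at h <;> simp at h
  refine ⟨⟨?_, ?_⟩, Finset.sum_union hPQ⟩
  · intro s hs
    rcases Finset.mem_union.1 hs with h | h
    · exact hP.1 s h
    · exact hQ.1 s h
  · intro s hs t ht hst
    rw [Finset.coe_union, Set.mem_union] at hs ht
    rcases hs with hs | hs <;> rcases ht with ht | ht
    · exact hP.2 hs ht hst
    · exact hd s hs t ht
    · exact (hd t ht s hs).symm
    · exact hQ.2 hs ht hst

lemma packing_single {D : Dgr} {s : Finset ℕ} (hc : s.card = 2 ∨ s.card = 3)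
    (hsub : s ⊆ D.verts) (hadj : ∀ u ∈ s, ∀ v ∈ s, u ≠ v → D.Adj u v) :
    D.IsPacking {s} := by
  refine ⟨?_, by rw [Finset.coe_singleton]; exact Set.pairwise_singleton _ _⟩
  intro t ht
  rw [Finset.mem_singleton] at ht
  subst ht
  exact ⟨hc, hsub, hadj⟩

lemma side_lemma (D : Dgr) (P : Finset (Finset ℕ)) (v0 : ℕ)
    (hcard : ∀ s ∈ P, s.card = 2 ∨ s.card = 3)
    (hpair : (P : Set (Finset ℕ)).Pairwise Disjoint)
    (hgood : ∀ s ∈ P, v0 ∉ s → s ⊆ D.verts ∧ ∀ u ∈ s, ∀ v ∈ s, u ≠ v → D.Adj u v)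
    (hbad : ∀ s ∈ P, v0 ∈ s →
      (s.erase v0) ⊆ D.verts ∧ ∀ u ∈ s.erase v0, ∀ v ∈ s.erase v0, u ≠ v → D.Adj u v) :
    ∃ Q : Finset (Finset ℕ), D.IsPacking Q ∧ (∀ t ∈ Q, ∃ s ∈ P, t ⊆ s) ∧
      ∑ s ∈ P, (s.card - 1) ≤ (∑ t ∈ Q, (t.card - 1)) + 1 := by
  classical
  by_cases hex : ∃ s ∈ P, v0 ∈ s
  · obtain ⟨s0, hs0, hv0⟩ := hex
    have hnot : ∀ t ∈ P.erase s0, v0 ∉ t := by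
      intro t ht hv
      obtain ⟨hne, htP⟩ := Finset.mem_erase.1 ht
      exact Finset.disjoint_left.1 (hpair (Finset.mem_coe.2 htP) (Finset.mem_coe.2 hs0) hne) hv hv0
    have hEpack : D.IsPacking (P.erase s0) := by
      refine ⟨fun s hs => ?_, ?_⟩
      · obtain ⟨h1, h2⟩ := hgood s (Finset.mem_of_mem_erase hs) (hnot s hs)
        exact ⟨hcard s (Finset.mem_of_mem_erase hs), h1, h2⟩
      · exact hpair.mono (by simp)
    have hsum0 : (∑ s ∈ P.erase s0, (s.card - 1)) + (s0.card - 1) = ∑ s ∈ P, (s.card - 1) :=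
      Finset.sum_erase_add P _ hs0
    rcases hcard s0 hs0 with h2 | h3
    · refine ⟨P.erase s0, hEpack, fun t ht => ⟨t, Finset.mem_of_mem_erase ht, subset_rfl⟩, ?_⟩
      omega
    · have herase : (s0.erase v0).card = 2 := by
        rw [Finset.card_erase_of_mem hv0, h3]
      have hsingle : D.IsPacking {s0.erase v0} :=
        packing_single (Or.inl herase) (hbad s0 hs0 hv0).1 (hbad s0 hs0 hv0).2
      obtain ⟨hpk, hsm⟩ := packing_union hEpack hsingle (by
        intro s hs t ht
        rw [Finset.mem_singleton] at ht
        subst ht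
        exact Finset.disjoint_of_subset_right (Finset.erase_subset _ _)
          (hpair (Finset.mem_coe.2 (Finset.mem_of_mem_erase hs)) (Finset.mem_coe.2 hs0)
            (Finset.mem_erase.1 hs).1))
      refine ⟨P.erase s0 ∪ {s0.erase v0}, hpk, ?_, ?_⟩
      · intro t ht
        rcases Finset.mem_union.1 ht with ht | ht
        · exact ⟨t, Finset.mem_of_mem_erase ht, subset_rfl⟩
        · exact ⟨s0, hs0, (Finset.mem_singleton.1 ht) ▸ Finset.erase_subset _ _⟩
      · rw [hsm, Finset.sum_singleton, herase]
        omega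
  · push_neg at hex
    exact ⟨P, ⟨fun s hs => ⟨hcard s hs, (hgood s hs (hex s hs)).1, (hgood s hs (hex s hs)).2⟩,
      hpair⟩, fun t ht => ⟨t, ht, subset_rfl⟩, by omega⟩

end OreHelpers

/-- `T` under Ore-composition. -/
theorem stmt_1 (D1 D2 D : Dgr) (h : Dgr.IsOreComp D1 D2 D) :
    D1.TT + D2.TT ≤ D.TT + 2 ∧
    ((Dgr.IsBidirComplete 4 D1 ∨ Dgr.IsBidirComplete 4 D2) →
      D1.TT + D2.TT ≤ D.TT + 1) := by
  classical
  obtain ⟨hb1, hb2, hdisj, x, y, z, Z1, Z2, hx, hy, hxy, hxyadj, hz, hZ, hZd, hZ1ne, hZ2ne,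
    hV, hA⟩ := h
  have hD1V : D1.verts ⊆ D.verts := by rw [hV]; exact Finset.subset_union_left
  have hD2V : ∀ {v : ℕ}, v ∈ D2.verts → v ≠ z → v ∈ D.verts := by
    intro v hv hvz
    rw [hV]; exact Finset.mem_union_right _ (Finset.mem_erase.2 ⟨hvz, hv⟩)
  have sep : ∀ {v : ℕ}, v ∈ D1.verts → v ∉ D2.verts := fun hv => Finset.disjoint_left.1 hdisj hv
  have adj1 : ∀ {u v : ℕ}, D1.Adj u v → ¬(u = x ∧ v = y) → ¬(u = y ∧ v = x) → D.Adj u v :=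
    fun h1 h2 h3 => (hA _ _).2 (Or.inl ⟨h1, h2, h3⟩)
  have adj2 : ∀ {u v : ℕ}, D2.Adj u v → u ≠ z → v ≠ z → D.Adj u v :=
    fun h1 h2 h3 => (hA _ _).2 (Or.inr (Or.inl ⟨h1, h2, h3⟩))
  have hZiff : ∀ a, a ∈ Z1 ∪ Z2 ↔ D2.Adj z a := fun a => by rw [hZ]; exact Iff.rfl
  have adjxZ1 : ∀ {a}, a ∈ Z1 → D.Adj x a ∧ D.Adj a x := by
    intro a ha
    have hza : D2.Adj z a := (hZiff a).1 (Or.inl ha)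
    exact ⟨(hA _ _).2 (Or.inr (Or.inr (Or.inl ⟨rfl, ha, hza⟩))),
      (hA _ _).2 (Or.inr (Or.inr (Or.inr (Or.inl ⟨rfl, ha, hb2 hza⟩))))⟩
  have adjyZ2 : ∀ {a}, a ∈ Z2 → D.Adj y a ∧ D.Adj a y := by
    intro a ha
    have hza : D2.Adj z a := (hZiff a).1 (Or.inr ha)
    exact ⟨(hA _ _).2 (Or.inr (Or.inr (Or.inr (Or.inr (Or.inl ⟨rfl, ha, hza⟩))))),
      (hA _ _).2 (Or.inr (Or.inr (Or.inr (Or.inr (Or.inr ⟨rfl, ha, hb2 hza⟩)))))⟩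
  obtain ⟨P1, hP1, hT1⟩ := OreHelpers.TT_exists D1
  obtain ⟨P2, hP2, hT2⟩ := OreHelpers.TT_exists D2
  obtain ⟨Q1, hQ1, hQ1cov, hQ1sum⟩ := OreHelpers.side_lemma D P1 x
    (fun s hs => (hP1.1 s hs).1) hP1.2
    (by
      intro s hs hxs
      refine ⟨(hP1.1 s hs).2.1.trans hD1V, ?_⟩
      intro u hu v hv huv
      exact adj1 ((hP1.1 s hs).2.2 u hu v hv huv)
        (fun hc => hxs (hc.1 ▸ hu)) (fun hc => hxs (hc.2 ▸ hv)))
    (by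
      intro s hs hxs
      constructor
      · exact ((Finset.erase_subset _ _).trans (hP1.1 s hs).2.1).trans hD1V
      · intro u hu v hv huv
        obtain ⟨hux, hu'⟩ := Finset.mem_erase.1 hu
        obtain ⟨hvx, hv'⟩ := Finset.mem_erase.1 hv
        exact adj1 ((hP1.1 s hs).2.2 u hu' v hv' huv)
          (fun hc => hux hc.1) (fun hc => hvx hc.2))
  have hQ1sub : ∀ s ∈ Q1, s ⊆ D1.verts := by
    intro t ht
    obtain ⟨s, hs, hts⟩ := hQ1cov t ht
    exact hts.trans (hP1.1 s hs).2.1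
  obtain ⟨Q2, hQ2, hQ2cov, hQ2sum⟩ := OreHelpers.side_lemma D P2 z
    (fun s hs => (hP2.1 s hs).1) hP2.2
    (by
      intro s hs hzs
      constructor
      · intro v hv; exact hD2V ((hP2.1 s hs).2.1 hv) (fun hc => hzs (hc ▸ hv))
      · intro u hu v hv huv
        exact adj2 ((hP2.1 s hs).2.2 u hu v hv huv)
          (fun hc => hzs (hc ▸ hu)) (fun hc => hzs (hc ▸ hv)))
    (by
      intro s hs hzs
      constructor
      · intro v hv
        obtain ⟨hvz, hv'⟩ := Finset.mem_erase.1 hv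
        exact hD2V ((hP2.1 s hs).2.1 hv') hvz
      · intro u hu v hv huv
        obtain ⟨huz, hu'⟩ := Finset.mem_erase.1 hu
        obtain ⟨hvz, hv'⟩ := Finset.mem_erase.1 hv
        exact adj2 ((hP2.1 s hs).2.2 u hu' v hv' huv) huz hvz)
  have hQ2sub : ∀ s ∈ Q2, s ⊆ D2.verts := by
    intro t ht
    obtain ⟨s, hs, hts⟩ := hQ2cov t ht
    exact hts.trans (hP2.1 s hs).2.1
  have hcross : ∀ s ∈ Q1, ∀ t ∈ Q2, Disjoint s t := fun s hs t ht =>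
    Finset.disjoint_of_subset_left (hQ1sub s hs)
      (Finset.disjoint_of_subset_right (hQ2sub t ht) hdisj)
  obtain ⟨hQpack, hQsum⟩ := OreHelpers.packing_union hQ1 hQ2 hcross
  have hQle := OreHelpers.le_TT hQpack
  refine ⟨by omega, ?_⟩
  rintro (hK | hK)
  · -- D1 is a bidirected K4
    obtain ⟨hc4, hcomp⟩ := hK
    have hT1le : D1.TT ≤ 2 := OreHelpers.TT_le_two hc4
    have hyW : y ∈ D1.verts.erase x := Finset.mem_erase.2 ⟨fun hc => hxy hc.symm, hy⟩
    set W : Finset ℕ := (D1.verts.erase x).erase y with hWdef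
    have hWcard : W.card = 2 := by
      rw [hWdef, Finset.card_erase_of_mem hyW, Finset.card_erase_of_mem hx, hc4]
    have hWsub1 : W ⊆ D1.verts := (Finset.erase_subset _ _).trans (Finset.erase_subset _ _)
    have hWmem : ∀ {v}, v ∈ W → v ∈ D1.verts ∧ v ≠ x ∧ v ≠ y := by
      intro v hv
      obtain ⟨hvy, hv2⟩ := Finset.mem_erase.1 hv
      obtain ⟨hvx, hv3⟩ := Finset.mem_erase.1 hv2
      exact ⟨hv3, hvx, hvy⟩
    have hWpack : D.IsPacking {W} := by
      apply OreHelpers.packing_single (Or.inl hWcard) (hWsub1.trans hD1V)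
      intro u hu v hv huv
      obtain ⟨hu1, hux, huy⟩ := hWmem hu
      obtain ⟨hv1, hvx, hvy⟩ := hWmem hv
      exact adj1 (hcomp u hu1 v hv1 huv) (fun hc => hux hc.1) (fun hc => huy hc.1)
    set pa : ℕ → ℕ := fun a => if a ∈ Z1 then x else y with hpadef
    have hpaxy : ∀ a, pa a = x ∨ pa a = y := by
      intro a; by_cases hc : a ∈ Z1 <;> simp [hpadef, hc]
    have hpaD1 : ∀ a, pa a ∈ D1.verts := by
      intro a; rcases hpaxy a with hc | hc <;> rw [hc] <;> assumption
    have hpaW : ∀ a, pa a ∉ W := by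
      intro a hc
      rcases hpaxy a with hc' | hc' <;> rw [hc'] at hc
      · exact (hWmem hc).2.1 rfl
      · exact (hWmem hc).2.2 rfl
    have adjpa : ∀ {a}, D2.Adj z a → D.Adj (pa a) a ∧ D.Adj a (pa a) := by
      intro a hza
      have hmem : a ∈ Z1 ∪ Z2 := (hZiff a).2 hza
      by_cases hc : a ∈ Z1
      · have hpx : pa a = x := by simp [hpadef, hc]
        rw [hpx]; exact adjxZ1 hc
      · have ha2 : a ∈ Z2 := hmem.resolve_left hc
        have hpy : pa a = y := by simp [hpadef, hc]
        rw [hpy]; exact adjyZ2 ha2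
    by_cases hex2 : ∃ s ∈ P2, z ∈ s
    · obtain ⟨s2, hs2, hz2⟩ := hex2
      have hznot : ∀ t ∈ P2.erase s2, z ∉ t := fun t ht hzt =>
        Finset.disjoint_left.1 (hP2.2 (Finset.mem_coe.2 (Finset.mem_of_mem_erase ht))
          (Finset.mem_coe.2 hs2) (Finset.mem_erase.1 ht).1) hzt hz2
      have hF2 : D.IsPacking (P2.erase s2) := by
        refine ⟨fun s hs => ⟨(hP2.1 s (Finset.mem_of_mem_erase hs)).1, ?_, ?_⟩,
          hP2.2.mono (by simp)⟩
        · intro v hv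
          exact hD2V ((hP2.1 s (Finset.mem_of_mem_erase hs)).2.1 hv)
            (fun hc => hznot s hs (hc ▸ hv))
        · intro u hu v hv huv
          exact adj2 ((hP2.1 s (Finset.mem_of_mem_erase hs)).2.2 u hu v hv huv)
            (fun hc => hznot s hs (hc ▸ hu)) (fun hc => hznot s hs (hc ▸ hv))
      have hs2sub := (hP2.1 s2 hs2).2.1
      have hs2adj := (hP2.1 s2 hs2).2.2
      have hsum2 : (∑ s ∈ P2.erase s2, (s.card - 1)) + (s2.card - 1) = ∑ s ∈ P2, (s.card - 1) :=
        Finset.sum_erase_add _ _ hs2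
      have hdig : ∀ {a}, a ∈ D2.verts → a ≠ z → D2.Adj z a →
          D.IsPacking {({pa a, a} : Finset ℕ)} ∧ ({pa a, a} : Finset ℕ).card = 2 := by
        intro a ha2 haz hza
        have hne : pa a ≠ a := fun hc => sep (hc ▸ hpaD1 a) ha2
        have hcard : ({pa a, a} : Finset ℕ).card = 2 := Finset.card_pair hne
        refine ⟨OreHelpers.packing_single (Or.inl hcard) ?_ ?_, hcard⟩
        · intro v hv
          rcases Finset.mem_insert.1 hv with rfl | hv
          · exact hD1V (hpaD1 a)
          · rw [Finset.mem_singleton] at hv; subst hv; exact hD2V ha2 haz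
        · intro u hu v hv huv
          simp only [Finset.mem_insert, Finset.mem_singleton] at hu hv
          rcases hu with rfl | rfl <;> rcases hv with rfl | rfl
          · exact absurd rfl huv
          · exact (adjpa hza).1
          · exact (adjpa hza).2
          · exact absurd rfl huv
      have hdisjF2 : ∀ {a}, a ∈ s2 → ∀ t ∈ P2.erase s2, Disjoint ({pa a, a} : Finset ℕ) t := by
        intro a has2 t ht
        rw [Finset.disjoint_left]
        intro v hv hvt
        rcases Finset.mem_insert.1 hv with rfl | hv
        · exact sep (hpaD1 a) ((hP2.1 t (Finset.mem_of_mem_erase ht)).2.1 hvt)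
        · rw [Finset.mem_singleton] at hv; subst hv
          exact Finset.disjoint_left.1 (hP2.2 (Finset.mem_coe.2 hs2)
            (Finset.mem_coe.2 (Finset.mem_of_mem_erase ht))
            (Ne.symm (Finset.mem_erase.1 ht).1)) has2 hvt
      have hdisjW : ∀ {a}, a ∈ D2.verts → Disjoint ({pa a, a} : Finset ℕ) W := by
        intro a ha2
        rw [Finset.disjoint_left]
        intro v hv hvW
        rcases Finset.mem_insert.1 hv with rfl | hv
        · exact hpaW a hvW
        · rw [Finset.mem_singleton] at hv; subst hv
          exact sep (hWsub1 hvW) ha2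
      have hF2W : ∀ s ∈ P2.erase s2, Disjoint s W := by
        intro s hs
        rw [Finset.disjoint_left]
        intro v hv hvW
        exact sep (hWsub1 hvW) ((hP2.1 s (Finset.mem_of_mem_erase hs)).2.1 hv)
      rcases (hP2.1 s2 hs2).1 with hc2 | hc3
      · -- s2 is a digon containing z
        have h1 : (s2.erase z).card = 1 := by rw [Finset.card_erase_of_mem hz2, hc2]
        obtain ⟨a, ha⟩ := Finset.card_eq_one.1 h1
        have ha' : a ∈ s2.erase z := by rw [ha]; exact Finset.mem_singleton_self a
        obtain ⟨haz, has2⟩ := Finset.mem_erase.1 ha'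
        have ha2 : a ∈ D2.verts := hs2sub has2
        have hza : D2.Adj z a := hs2adj z hz2 a has2 (Ne.symm haz)
        obtain ⟨hdpack, hdcard⟩ := hdig ha2 haz hza
        obtain ⟨hpk1, hsm1⟩ := OreHelpers.packing_union hF2 hdpack (by
          intro s hs t ht
          rw [Finset.mem_singleton] at ht; subst ht
          exact (hdisjF2 has2 s hs).symm)
        obtain ⟨hpk2, hsm2⟩ := OreHelpers.packing_union hpk1 hWpack (by
          intro s hs t ht
          rw [Finset.mem_singleton] at ht; subst ht
          rcases Finset.mem_union.1 hs with hs | hs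
          · exact hF2W s hs
          · rw [Finset.mem_singleton] at hs; subst hs; exact hdisjW ha2)
        have hle := OreHelpers.le_TT hpk2
        rw [hsm2, hsm1, Finset.sum_singleton, Finset.sum_singleton, hdcard, hWcard] at hle
        omega
      · -- s2 is a triangle containing z
        have h2' : (s2.erase z).card = 2 := by rw [Finset.card_erase_of_mem hz2, hc3]
        obtain ⟨a, b, hab, habs⟩ := Finset.card_eq_two.1 h2'
        have haz : a ∈ s2.erase z := by rw [habs]; simp
        have hbz : b ∈ s2.erase z := by rw [habs]; simp
        obtain ⟨haz', has2⟩ := Finset.mem_erase.1 haz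
        obtain ⟨hbz', hbs2⟩ := Finset.mem_erase.1 hbz
        have ha2 : a ∈ D2.verts := hs2sub has2
        have hb2' : b ∈ D2.verts := hs2sub hbs2
        have hza : D2.Adj z a := hs2adj z hz2 a has2 (Ne.symm haz')
        have hzb : D2.Adj z b := hs2adj z hz2 b hbs2 (Ne.symm hbz')
        have hab1 : D.Adj a b := adj2 (hs2adj a has2 b hbs2 hab) haz' hbz'
        have hab2 : D.Adj b a := adj2 (hs2adj b hbs2 a has2 hab.symm) hbz' haz'
        by_cases hsame : pa a = pa b
        · -- triangle {pa a, a, b}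
          have hpaa : pa a ∉ ({a, b} : Finset ℕ) := by
            intro hc
            rcases Finset.mem_insert.1 hc with hc | hc
            · exact sep (hc ▸ hpaD1 a) ha2
            · rw [Finset.mem_singleton] at hc; exact sep (hc ▸ hpaD1 a) hb2'
          have hTcard : (insert (pa a) ({a, b} : Finset ℕ)).card = 3 := by
            rw [Finset.card_insert_of_notMem hpaa, Finset.card_pair hab]
          have hTpack : D.IsPacking {insert (pa a) ({a, b} : Finset ℕ)} := by
            apply OreHelpers.packing_single (Or.inr hTcard)
            · intro v hv
              simp only [Finset.mem_insert, Finset.mem_singleton] at hv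
              rcases hv with rfl | rfl | rfl
              · exact hD1V (hpaD1 a)
              · exact hD2V ha2 haz'
              · exact hD2V hb2' hbz'
            · intro u hu v hv huv
              simp only [Finset.mem_insert, Finset.mem_singleton] at hu hv
              rcases hu with rfl | rfl | rfl <;> rcases hv with rfl | rfl | rfl <;>
                first
                | exact absurd rfl huv
                | exact (adjpa hza).1
                | exact (adjpa hza).2
                | exact hab1
                | exact hab2
                | (rw [hsame]; exact (adjpa hzb).1)
                | (rw [hsame]; exact (adjpa hzb).2)
          have hTF2 : ∀ t ∈ P2.erase s2, Disjoint (insert (pa a) ({a, b} : Finset ℕ)) t := by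
            intro t ht
            rw [Finset.disjoint_left]
            intro v hv hvt
            have htsub := (hP2.1 t (Finset.mem_of_mem_erase ht)).2.1
            have hdisjs2 : Disjoint s2 t := hP2.2 (Finset.mem_coe.2 hs2)
              (Finset.mem_coe.2 (Finset.mem_of_mem_erase ht))
              (Ne.symm (Finset.mem_erase.1 ht).1)
            simp only [Finset.mem_insert, Finset.mem_singleton] at hv
            rcases hv with rfl | rfl | rfl
            · exact sep (hpaD1 a) (htsub hvt)
            · exact Finset.disjoint_left.1 hdisjs2 has2 hvt
            · exact Finset.disjoint_left.1 hdisjs2 hbs2 hvt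
          have hTW : Disjoint (insert (pa a) ({a, b} : Finset ℕ)) W := by
            rw [Finset.disjoint_left]
            intro v hv hvW
            simp only [Finset.mem_insert, Finset.mem_singleton] at hv
            rcases hv with rfl | rfl | rfl
            · exact hpaW a hvW
            · exact sep (hWsub1 hvW) ha2
            · exact sep (hWsub1 hvW) hb2'
          obtain ⟨hpk1, hsm1⟩ := OreHelpers.packing_union hF2 hTpack (by
            intro s hs t ht
            rw [Finset.mem_singleton] at ht; subst ht
            exact (hTF2 s hs).symm)
          obtain ⟨hpk2, hsm2⟩ := OreHelpers.packing_union hpk1 hWpack (by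
            intro s hs t ht
            rw [Finset.mem_singleton] at ht; subst ht
            rcases Finset.mem_union.1 hs with hs | hs
            · exact hF2W s hs
            · rw [Finset.mem_singleton] at hs; subst hs; exact hTW)
          have hle := OreHelpers.le_TT hpk2
          rw [hsm2, hsm1, Finset.sum_singleton, Finset.sum_singleton, hTcard, hWcard] at hle
          omega
        · -- two digons {pa a, a} and {pa b, b}
          obtain ⟨hdpackA, hdcardA⟩ := hdig ha2 haz' hza
          obtain ⟨hdpackB, hdcardB⟩ := hdig hb2' hbz' hzb
          have hABdisj : Disjoint ({pa a, a} : Finset ℕ) ({pa b, b} : Finset ℕ) := by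
            rw [Finset.disjoint_left]
            intro v hv hv'
            simp only [Finset.mem_insert, Finset.mem_singleton] at hv hv'
            rcases hv with rfl | rfl
            · rcases hv' with hc | hc
              · exact hsame hc
              · exact sep (hc ▸ hpaD1 a) hb2'
            · rcases hv' with hc | hc
              · exact sep (by rw [hc]; exact hpaD1 b) ha2
              · exact hab hc
          obtain ⟨hEpk, hEsm⟩ := OreHelpers.packing_union hdpackA hdpackB (by
            intro s hs t ht
            rw [Finset.mem_singleton] at hs ht; subst hs; subst ht
            exact hABdisj)
          obtain ⟨hpk1, hsm1⟩ := OreHelpers.packing_union hF2 hEpk (by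
            intro s hs t ht
            rcases Finset.mem_union.1 ht with ht | ht <;> rw [Finset.mem_singleton] at ht <;>
              subst ht
            · exact (hdisjF2 has2 s hs).symm
            · exact (hdisjF2 hbs2 s hs).symm)
          obtain ⟨hpk2, hsm2⟩ := OreHelpers.packing_union hpk1 hWpack (by
            intro s hs t ht
            rw [Finset.mem_singleton] at ht; subst ht
            rcases Finset.mem_union.1 hs with hs | hs
            · exact hF2W s hs
            · rcases Finset.mem_union.1 hs with hs | hs <;> rw [Finset.mem_singleton] at hs <;>
                subst hs
              · exact hdisjW ha2
              · exact hdisjW hb2')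
          have hle := OreHelpers.le_TT hpk2
          rw [hsm2, hsm1, hEsm, Finset.sum_singleton, Finset.sum_singleton,
            Finset.sum_singleton, hdcardA, hdcardB, hWcard] at hle
          omega
    · -- no element of P2 contains z
      push_neg at hex2
      have hP2D : D.IsPacking P2 := by
        refine ⟨fun s hs => ⟨(hP2.1 s hs).1, ?_, ?_⟩, hP2.2⟩
        · intro v hv
          exact hD2V ((hP2.1 s hs).2.1 hv) (fun hc => hex2 s hs (hc ▸ hv))
        · intro u hu v hv huv
          exact adj2 ((hP2.1 s hs).2.2 u hu v hv huv)
            (fun hc => hex2 s hs (hc ▸ hu)) (fun hc => hex2 s hs (hc ▸ hv))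
      obtain ⟨hpk, hsm⟩ := OreHelpers.packing_union hP2D hWpack (by
        intro s hs t ht
        rw [Finset.mem_singleton] at ht; subst ht
        rw [Finset.disjoint_left]
        intro v hv hvW
        exact sep (hWsub1 hvW) ((hP2.1 s hs).2.1 hv))
      have hle := OreHelpers.le_TT hpk
      rw [hsm, Finset.sum_singleton, hWcard] at hle
      omega
  · -- D2 is a bidirected K4
    obtain ⟨hc4, hcomp⟩ := hK
    have hT2le : D2.TT ≤ 2 := OreHelpers.TT_le_two hc4
    have htric : (D2.verts.erase z).card = 3 := by rw [Finset.card_erase_of_mem hz, hc4]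
    have htripack : D.IsPacking {D2.verts.erase z} := by
      apply OreHelpers.packing_single (Or.inr htric)
      · intro v hv
        obtain ⟨hvz, hv2⟩ := Finset.mem_erase.1 hv
        exact hD2V hv2 hvz
      · intro u hu v hv huv
        obtain ⟨huz, hu2⟩ := Finset.mem_erase.1 hu
        obtain ⟨hvz, hv2⟩ := Finset.mem_erase.1 hv
        exact adj2 (hcomp u hu2 v hv2 huv) huz hvz
    obtain ⟨hpk, hsm⟩ := OreHelpers.packing_union hQ1 htripack (by
      intro s hs t ht
      rw [Finset.mem_singleton] at ht; subst ht
      rw [Finset.disjoint_left]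
      intro v hv hvt
      exact sep (hQ1sub s hs hv) (Finset.mem_of_mem_erase hvt))
    have hle := OreHelpers.le_TT hpk
    rw [hsm, Finset.sum_singleton, htric] at hle
    omega
end

section
/- Every 4-Ore digraph is 4-dicritical: its dichromatic number is 4, and every proper subdigraph has dichromatic number at most 3. -/
open Dgr

namespace OreAux

open Dgr

/-- If the relation is empty, it is acyclic. -/
lemma acy_of_not_mono {r : ℕ → ℕ → Prop} (h : ∀ u v, ¬ r u v) : Acy r := by
  intro v hv
  cases hv with
  | single h' => exact h _ _ h'
  | tail _ h' => exact h _ _ h'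

/-- If the relation is contained in a single non-loop pair, it is acyclic. -/
lemma acy_single {r : ℕ → ℕ → Prop} {a b : ℕ} (hab : a ≠ b)
    (h : ∀ u v, r u v → u = b ∧ v = a) : Acy r := by
  have key : ∀ u v, Relation.TransGen r u v → u = b ∧ v = a := by
    intro u v huv
    induction huv with
    | single h' => exact h _ _ h'
    | tail hprev h' ih => exact ⟨ih.1, (h _ _ h').2⟩
  intro v hv
  obtain ⟨h1, h2⟩ := key _ _ hv
  exact hab (h2 ▸ h1 ▸ rfl)

/-- Colourings with no monochromatic arcs are dicolourings. -/
lemma isDicol_of_proper {D : Dgr} {k : ℕ} {φ : ℕ → Fin k}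
    (h : ∀ u v, D.Adj u v → φ u ≠ φ v) : D.IsDicol φ :=
  acy_of_not_mono (fun u v hc => h u v hc.1 hc.2)

/-- A dicolouring has no monochromatic digon. -/
lemma no_digon {D : Dgr} {k : ℕ} {φ : ℕ → Fin k} (h : D.IsDicol φ)
    {u v : ℕ} (h1 : D.Adj u v) (h2 : D.Adj v u) (he : φ u = φ v) : False :=
  h u (Relation.TransGen.head ⟨h1, he⟩ (Relation.TransGen.single ⟨h2, he.symm⟩))

lemma exists_perm_pair : ∀ (a b a' b' : Fin 3), a ≠ b → a' ≠ b' →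
    ∃ σ : Fin 3 → Fin 3, Function.Bijective σ ∧ σ a = a' ∧ σ b = b' := by decide

lemma exists_perm_one : ∀ (a a' : Fin 3),
    ∃ σ : Fin 3 → Fin 3, Function.Bijective σ ∧ σ a = a' := by decide

lemma exists_perm_comp {e f : Fin 3 → Fin 3} (he : Function.Bijective e)
    (hf : Function.Bijective f) :
    ∃ σ : Fin 3 → Fin 3, Function.Bijective σ ∧ ∀ i, σ (e i) = f i := by
  refine ⟨f ∘ (Equiv.ofBijective e he).symm, ?_, ?_⟩
  · exact hf.comp (Equiv.ofBijective e he).symm.bijective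
  · intro i
    have h1 : (Equiv.ofBijective e he).symm (e i) = i :=
      (Equiv.ofBijective e he).symm_apply_apply i
    simp only [Function.comp_apply, h1]

set_option maxRecDepth 20000 in
lemma hall3 : ∀ B : Fin 3 → Finset (Fin 3), (∀ i, B i ≠ Finset.univ) →
    (∀ i j, i ≠ j → Disjoint (B i) (B j)) →
    ∃ d : Fin 3 → Fin 3, Function.Bijective d ∧ ∀ i, ∀ γ ∈ B i, d i ≠ γ := by decide

lemma dicolourable_mono {D : Dgr} {k m : ℕ} (h : D.Dicolourable k) (hkm : k ≤ m) :
    D.Dicolourable m := by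
  obtain ⟨φ, hφ⟩ := h
  refine ⟨fun w => Fin.castLE hkm (φ w), ?_⟩
  intro v hv
  apply hφ v
  have : ∀ a b, (fun u v => D.Adj u v ∧ Fin.castLE hkm (φ u) = Fin.castLE hkm (φ v)) a b →
      (fun u v => D.Adj u v ∧ φ u = φ v) a b := by
    intro a b ⟨h1, h2⟩
    exact ⟨h1, Fin.castLE_injective hkm h2⟩
  exact Relation.TransGen.mono this v v hv

end OreAux
namespace OreAux
open Dgr

/-- The strengthened induction invariant for 4-Ore digraphs. -/
structure Inv (D : Dgr) : Prop where
  bidir : Bidirected D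
  nonempty : D.verts.Nonempty
  not3 : ¬ D.Dicolourable 3
  defArc : ∀ a b, D.Adj a b → ∃ c : ℕ → Fin 3, ∀ u v, D.Adj u v → c u = c v →
    (u = a ∧ v = b) ∨ (u = b ∧ v = a)
  defVtx : ∀ t ∈ D.verts, ∃ c : ℕ → Fin 3, ∀ u v, D.Adj u v → c u = c v →
    u = t ∨ v = t
  ext : ∀ v ∈ D.verts, ∀ P : Fin 3 → Set ℕ,
    (∀ i, P i ⊆ {w | D.Adj v w}) → (∀ i j, i ≠ j → Disjoint (P i) (P j)) →
    (∀ i, P i ≠ {w | D.Adj v w}) →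
    ∃ (c : ℕ → Fin 3) (d : Fin 3 → Fin 3), Function.Bijective d ∧
      (∀ u w, D.Adj u w → u ≠ v → w ≠ v → c u ≠ c w) ∧
      (∀ i, ∀ w ∈ P i, c w ≠ d i)

/-- From an arc-defect colouring, the two endpoints get equal colours
(otherwise the digraph would be 3-dicolourable). -/
lemma Inv.defArcForced {D : Dgr} (hI : Inv D) {a b : ℕ} (hab : D.Adj a b) :
    ∃ c : ℕ → Fin 3, c a = c b ∧ ∀ u v, D.Adj u v → c u = c v →
      (u = a ∧ v = b) ∨ (u = b ∧ v = a) := by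
  obtain ⟨c, hc⟩ := hI.defArc a b hab
  by_cases h : c a = c b
  · exact ⟨c, h, hc⟩
  · exfalso
    apply hI.not3
    refine ⟨c, isDicol_of_proper ?_⟩
    intro u v huv he
    rcases hc u v huv he with ⟨rfl, rfl⟩ | ⟨rfl, rfl⟩
    · exact h he
    · exact h he.symm

lemma castLE34_ne : ∀ x : Fin 3, Fin.castLE (by norm_num : 3 ≤ 4) x ≠ (3 : Fin 4) := by
  decide

lemma Inv.dicol4 {D : Dgr} (hI : Inv D) : D.Dicolourable 4 := by
  obtain ⟨t, ht⟩ := hI.nonempty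
  obtain ⟨c, hc⟩ := hI.defVtx t ht
  classical
  refine ⟨fun w => if w = t then (3 : Fin 4) else Fin.castLE (by norm_num) (c w), ?_⟩
  apply isDicol_of_proper
  intro u v huv he
  have hne : u ≠ v := by rintro rfl; exact D.adj_irrefl u huv
  by_cases hu : u = t <;> by_cases hv : v = t
  · exact hne (hu.trans hv.symm)
  · rw [if_pos hu, if_neg hv] at he
    exact castLE34_ne (c v) he.symm
  · rw [if_neg hu, if_pos hv] at he
    exact castLE34_ne (c u) he
  · rw [if_neg hu, if_neg hv] at he
    have := Fin.castLE_injective (by norm_num : 3 ≤ 4) he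
    rcases hc u v huv this with rfl | rfl
    · exact hu rfl
    · exact hv rfl

/-- A digraph satisfying the invariant has dichromatic number 4. -/
lemma Inv.dichr4 {D : Dgr} (hI : Inv D) : D.dichr = 4 := by
  have h4 : (4 : ℕ) ∈ {k | D.Dicolourable k} := hI.dicol4
  apply le_antisymm
  · exact Nat.sInf_le h4
  · apply le_csInf ⟨4, h4⟩
    intro m hm
    by_contra hlt
    push_neg at hlt
    exact hI.not3 (dicolourable_mono hm (by omega))

/-- A digraph satisfying the invariant is 4-dicritical. -/
lemma Inv.dicritical {D : Dgr} (hI : Inv D) : Dicritical 4 D := by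
  refine ⟨hI.dichr4, ?_⟩
  intro H hH
  obtain ⟨⟨hsub, hadj⟩, hns⟩ := hH
  have key : H.Dicolourable 3 := by
    by_cases hvsub : D.verts ⊆ H.verts
    · -- some arc of D is missing from H
      have : ∃ a b, D.Adj a b ∧ ¬ H.Adj a b := by
        by_contra hcon
        push_neg at hcon
        exact hns ⟨hvsub, fun u v h => hcon u v h⟩
      obtain ⟨a, b, hab, hnab⟩ := this
      obtain ⟨c, hc⟩ := hI.defArc a b hab
      have hne : a ≠ b := by rintro rfl; exact D.adj_irrefl a hab
      refine ⟨c, ?_⟩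
      apply acy_single hne
      intro u v ⟨huv, he⟩
      rcases hc u v (hadj huv) he with ⟨rfl, rfl⟩ | ⟨rfl, rfl⟩
      · exact absurd huv hnab
      · exact ⟨rfl, rfl⟩
    · -- some vertex of D is missing from H
      obtain ⟨t, ht, htH⟩ := Finset.not_subset.mp hvsub
      obtain ⟨c, hc⟩ := hI.defVtx t ht
      refine ⟨c, isDicol_of_proper ?_⟩
      intro u v huv he
      rcases hc u v (hadj huv) he with rfl | rfl
      · exact htH (H.adj_mem huv).1
      · exact htH (H.adj_mem huv).2
  calc H.dichr ≤ 3 := Nat.sInf_le key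
  _ < 4 := by norm_num

end OreAux
namespace OreAux
open Dgr

section Base

variable {D : Dgr}

lemma bc_adj_iff (h : IsBidirComplete 4 D) (u v : ℕ) :
    D.Adj u v ↔ u ∈ D.verts ∧ v ∈ D.verts ∧ u ≠ v := by
  constructor
  · intro huv
    refine ⟨(D.adj_mem huv).1, (D.adj_mem huv).2, ?_⟩
    rintro rfl; exact D.adj_irrefl u huv
  · rintro ⟨h1, h2, h3⟩
    exact h.2 u h1 v h2 h3

lemma inv_base (h : IsBidirComplete 4 D) : Inv D := by
  classical
  have hcard := h.1
  constructor
  · -- bidirected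
    intro u v huv
    rw [bc_adj_iff h] at huv ⊢
    exact ⟨huv.2.1, huv.1, huv.2.2.symm⟩
  · -- nonempty
    rw [← Finset.card_pos, hcard]; norm_num
  · -- not 3-dicolourable
    rintro ⟨φ, hφ⟩
    have hlt : (Finset.univ : Finset (Fin 3)).card < D.verts.card := by
      rw [hcard]; simp
    obtain ⟨u, hu, v, hv, hne, he⟩ :=
      Finset.exists_ne_map_eq_of_card_lt_of_maps_to hlt
        (fun a _ => Finset.mem_univ (φ a))
    exact no_digon hφ (h.2 u hu v hv hne) (h.2 v hv u hu hne.symm) he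
  · -- arc defect
    intro a b hab
    have ha : a ∈ D.verts := (D.adj_mem hab).1
    have hb : b ∈ D.verts := (D.adj_mem hab).2
    have hne : a ≠ b := by rintro rfl; exact D.adj_irrefl a hab
    have hc2 : ((D.verts.erase b).erase a).card = 2 := by
      rw [Finset.card_erase_of_mem (Finset.mem_erase.mpr ⟨hne, ha⟩),
        Finset.card_erase_of_mem hb, hcard]
    obtain ⟨r, s, hrs, hset⟩ := Finset.card_eq_two.mp hc2
    have hrmem : r ∈ (D.verts.erase b).erase a := hset ▸ (by simp)
    have hsmem : s ∈ (D.verts.erase b).erase a := hset ▸ (by simp)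
    have hra : r ≠ a := (Finset.mem_erase.mp hrmem).1
    have hrb : r ≠ b := (Finset.mem_erase.mp ((Finset.mem_erase.mp hrmem).2)).1
    have hsa : s ≠ a := (Finset.mem_erase.mp hsmem).1
    have hsb : s ≠ b := (Finset.mem_erase.mp ((Finset.mem_erase.mp hsmem).2)).1
    set c : ℕ → Fin 3 := fun w => if w = r then 1 else if w = s then 2 else 0 with hcdef
    have hca : c a = 0 := by rw [hcdef]; simp [Ne.symm hra, Ne.symm hsa]
    have hcb : c b = 0 := by rw [hcdef]; simp [Ne.symm hrb, Ne.symm hsb]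
    have hcr : c r = 1 := by rw [hcdef]; simp
    have hcs : c s = 2 := by rw [hcdef]; simp [hrs.symm]
    refine ⟨c, ?_⟩
    intro u v huv he
    rw [bc_adj_iff h] at huv
    obtain ⟨hu, hv, huvne⟩ := huv
    have hmem : ∀ w, w ∈ D.verts → w = a ∨ w = b ∨ w = r ∨ w = s := by
      intro w hw
      by_contra hcon
      push_neg at hcon
      obtain ⟨h1, h2, h3, h4⟩ := hcon
      have : w ∈ (D.verts.erase b).erase a :=
        Finset.mem_erase.mpr ⟨h1, Finset.mem_erase.mpr ⟨h2, hw⟩⟩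
      rw [hset] at this
      simp at this
      tauto
    rcases hmem u hu with rfl | rfl | rfl | rfl <;>
      rcases hmem v hv with rfl | rfl | rfl | rfl <;>
      (clear hcdef; simp_all [hca, hcb, hcr, hcs])
  · -- vertex defect
    intro t ht
    have hc3 : (D.verts.erase t).card = 3 := by
      rw [Finset.card_erase_of_mem ht, hcard]
    obtain ⟨p, q, r, hpq, hpr, hqr, hset⟩ := Finset.card_eq_three.mp hc3
    have hpm : p ∈ D.verts.erase t := hset ▸ (by simp)
    have hqm : q ∈ D.verts.erase t := hset ▸ (by simp)
    have hrm : r ∈ D.verts.erase t := hset ▸ (by simp)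
    have hpt : p ≠ t := (Finset.mem_erase.mp hpm).1
    have hqt : q ≠ t := (Finset.mem_erase.mp hqm).1
    have hrt : r ≠ t := (Finset.mem_erase.mp hrm).1
    set c : ℕ → Fin 3 := fun w => if w = p then 0 else if w = q then 1 else 2 with hcdef
    have hcp : c p = 0 := by rw [hcdef]; simp
    have hcq : c q = 1 := by rw [hcdef]; simp [hpq.symm]
    have hcr : c r = 2 := by rw [hcdef]; simp [hpr.symm, hqr.symm]
    refine ⟨c, ?_⟩
    intro u v huv he
    rw [bc_adj_iff h] at huv
    obtain ⟨hu, hv, huvne⟩ := huv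
    have hmem : ∀ w, w ∈ D.verts → w = t ∨ w = p ∨ w = q ∨ w = r := by
      intro w hw
      by_contra hcon
      push_neg at hcon
      obtain ⟨h1, h2, h3, h4⟩ := hcon
      have : w ∈ D.verts.erase t := Finset.mem_erase.mpr ⟨h1, hw⟩
      rw [hset] at this
      simp at this
      tauto
    rcases hmem u hu with rfl | rfl | rfl | rfl <;>
      rcases hmem v hv with rfl | rfl | rfl | rfl <;>
      (clear hcdef; simp_all [hcp, hcq, hcr])
  · -- ext
    intro v hv P hPsub hPdisj hPne
    have hc3 : (D.verts.erase v).card = 3 := by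
      rw [Finset.card_erase_of_mem hv, hcard]
    obtain ⟨p, q, r, hpq, hpr, hqr, hset⟩ := Finset.card_eq_three.mp hc3
    have hN : {w | D.Adj v w} = ↑(D.verts.erase v) := by
      ext w
      rw [Set.mem_setOf_eq, bc_adj_iff h, Finset.coe_erase, Set.mem_diff]
      constructor
      · rintro ⟨_, h2, h3⟩; exact ⟨h2, by simpa using (Ne.symm h3)⟩
      · rintro ⟨h1, h2⟩
        simp only [Set.mem_singleton_iff] at h2
        exact ⟨hv, h1, fun hh => h2 hh.symm⟩
    set c : ℕ → Fin 3 := fun w => if w = p then 0 else if w = q then 1 else 2 with hcdef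
    have hcp : c p = 0 := by rw [hcdef]; simp
    have hcq : c q = 1 := by rw [hcdef]; simp [hpq.symm]
    have hcr : c r = 2 := by rw [hcdef]; simp [hpr.symm, hqr.symm]
    have hinj : ∀ w w', w ∈ D.verts.erase v → w' ∈ D.verts.erase v → c w = c w' → w = w' := by
      intro w w' hw hw' hcc
      rw [hset] at hw hw'
      simp only [Finset.mem_insert, Finset.mem_singleton] at hw hw'
      rcases hw with rfl | rfl | rfl <;> rcases hw' with rfl | rfl | rfl <;>
        (clear hcdef; simp_all [hcp, hcq, hcr])
    set B : Fin 3 → Finset (Fin 3) :=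
      fun i => Finset.univ.filter (fun γ => ∃ w ∈ P i, c w = γ) with hBdef
    have hmemN : ∀ i, ∀ w ∈ P i, w ∈ D.verts.erase v := by
      intro i w hw
      have := hPsub i hw
      rw [hN] at this
      exact this
    have hBne : ∀ i, B i ≠ Finset.univ := by
      intro i hcon
      have hss : P i ⊂ {w | D.Adj v w} := ⟨hPsub i, fun hsup => hPne i
        (Set.Subset.antisymm (hPsub i) hsup)⟩
      obtain ⟨t0, ht0N, ht0P⟩ := Set.exists_of_ssubset hss
      have ht0e : t0 ∈ D.verts.erase v := by rw [hN] at ht0N; exact ht0N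
      have : c t0 ∈ B i := hcon ▸ Finset.mem_univ _
      rw [hBdef] at this
      simp only [Finset.mem_filter, Finset.mem_univ, true_and] at this
      obtain ⟨w, hw, hwc⟩ := this
      exact ht0P (hinj w t0 (hmemN i w hw) ht0e hwc ▸ hw)
    have hBdisj : ∀ i j, i ≠ j → Disjoint (B i) (B j) := by
      intro i j hij
      rw [Finset.disjoint_left]
      intro γ hγi hγj
      simp only [hBdef, Finset.mem_filter, Finset.mem_univ, true_and] at hγi hγj
      obtain ⟨w, hw, hwc⟩ := hγi
      obtain ⟨w', hw', hwc'⟩ := hγj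
      have : w = w' := hinj w w' (hmemN i w hw) (hmemN j w' hw') (hwc.trans hwc'.symm)
      exact (Set.disjoint_left.mp (hPdisj i j hij) hw) (this ▸ hw')
    obtain ⟨d, hdbij, hd⟩ := hall3 B hBne hBdisj
    refine ⟨c, d, hdbij, ?_, ?_⟩
    · intro u w huw hune hwne
      rw [bc_adj_iff h] at huw
      obtain ⟨hu, hw, hne⟩ := huw
      intro hcc
      exact hne (hinj u w (Finset.mem_erase.mpr ⟨hune, hu⟩)
        (Finset.mem_erase.mpr ⟨hwne, hw⟩) hcc)
    · intro i w hw hcc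
      have : c w ∈ B i := by
        rw [hBdef]
        simp only [Finset.mem_filter, Finset.mem_univ, true_and]
        exact ⟨w, hw, rfl⟩
      exact hd i (c w) this hcc.symm
end Base
end OreAux
namespace OreAux
open Dgr

/-- The master gluing lemma for Ore compositions. -/
lemma glue_mono {D1 D2 D : Dgr} {x y z : ℕ} {Z1 Z2 : Set ℕ}
    (hdisj : Disjoint D1.verts D2.verts)
    (hx1 : x ∈ D1.verts) (hy1 : y ∈ D1.verts)
    (hZ1sub : Z1 ⊆ {w | D2.Adj z w}) (hZ2sub : Z2 ⊆ {w | D2.Adj z w})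
    (hAdj : ∀ u v, D.Adj u v ↔
      (D1.Adj u v ∧ ¬(u = x ∧ v = y) ∧ ¬(u = y ∧ v = x)) ∨
      (D2.Adj u v ∧ u ≠ z ∧ v ≠ z) ∨
      (u = x ∧ v ∈ Z1 ∧ D2.Adj z v) ∨ (v = x ∧ u ∈ Z1 ∧ D2.Adj u z) ∨
      (u = y ∧ v ∈ Z2 ∧ D2.Adj z v) ∨ (v = y ∧ u ∈ Z2 ∧ D2.Adj u z))
    (c1 c2 : ℕ → Fin 3) (E : ℕ → ℕ → Prop)
    (H1 : ∀ u v, D1.Adj u v → ¬(u = x ∧ v = y) → ¬(u = y ∧ v = x) →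
      c1 u = c1 v → E u v)
    (H2 : ∀ u v, D2.Adj u v → u ≠ z → v ≠ z → c2 u = c2 v → E u v)
    (H3 : ∀ w ∈ Z1, c1 x = c2 w → E x w ∧ E w x)
    (H4 : ∀ w ∈ Z2, c1 y = c2 w → E y w ∧ E w y) :
    ∀ u v, D.Adj u v →
      (fun w => if w ∈ D2.verts then c2 w else c1 w) u =
      (fun w => if w ∈ D2.verts then c2 w else c1 w) v → E u v := by
  classical
  intro u v hD hc
  simp only at hc
  have hmem1 : ∀ w, w ∈ D1.verts → w ∉ D2.verts :=
    fun w hw => Finset.disjoint_left.mp hdisj hw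
  rw [hAdj] at hD
  rcases hD with ⟨h, hn1, hn2⟩ | ⟨h, hu, hv⟩ | ⟨rfl, hv1, hzv⟩ | ⟨rfl, hu1, huz⟩ |
    ⟨rfl, hv2, hzv⟩ | ⟨rfl, hu2, huz⟩
  · have h1 := hmem1 u (D1.adj_mem h).1
    have h2 := hmem1 v (D1.adj_mem h).2
    rw [if_neg h1, if_neg h2] at hc
    exact H1 u v h hn1 hn2 hc
  · have h1 := (D2.adj_mem h).1
    have h2 := (D2.adj_mem h).2
    rw [if_pos h1, if_pos h2] at hc
    exact H2 u v h hu hv hc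
  · rw [if_neg (hmem1 _ hx1), if_pos (D2.adj_mem hzv).2] at hc
    exact (H3 v hv1 hc).1
  · rw [if_pos (D2.adj_mem huz).1, if_neg (hmem1 _ hx1)] at hc
    exact (H3 u hu1 hc.symm).2
  · rw [if_neg (hmem1 _ hy1), if_pos (D2.adj_mem hzv).2] at hc
    exact (H4 v hv2 hc).1
  · rw [if_pos (D2.adj_mem huz).1, if_neg (hmem1 _ hy1)] at hc
    exact (H4 u hu2 hc.symm).2

end OreAux
namespace OreAux
open Dgr

lemma inv_comp {D1 D2 D : Dgr} (h1 : Inv D1) (h2 : Inv D2)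
    (hC : IsOreComp D1 D2 D) : Inv D := by
  classical
  obtain ⟨bid1, bid2, hdisj, x, y, z, Z1, Z2, hx1, hy1, hxy, hxyAdj, hz2,
    hZun, hZd, hZ1ne, hZ2ne, hVerts, hAdj⟩ := hC
  have hZ1sub : Z1 ⊆ {w | D2.Adj z w} := hZun ▸ Set.subset_union_left
  have hZ2sub : Z2 ⊆ {w | D2.Adj z w} := hZun ▸ Set.subset_union_right
  have hx2 : x ∉ D2.verts := Finset.disjoint_left.mp hdisj hx1
  have hy2 : y ∉ D2.verts := Finset.disjoint_left.mp hdisj hy1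
  have hz1 : z ∉ D1.verts := Finset.disjoint_right.mp hdisj hz2
  have hZ1V2 : ∀ w ∈ Z1, w ∈ D2.verts := fun w hw => (D2.adj_mem (hZ1sub hw)).2
  have hZ2V2 : ∀ w ∈ Z2, w ∈ D2.verts := fun w hw => (D2.adj_mem (hZ2sub hw)).2
  have hZ1nz : ∀ w ∈ Z1, w ≠ z := by
    rintro w hw rfl; exact D2.adj_irrefl w (hZ1sub hw)
  have hZ2nz : ∀ w ∈ Z2, w ≠ z := by
    rintro w hw rfl; exact D2.adj_irrefl w (hZ2sub hw)
  have hxZ1 : x ∉ Z1 := fun h => hx2 (hZ1V2 x h)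
  have hxZ2 : x ∉ Z2 := fun h => hx2 (hZ2V2 x h)
  have hyZ1 : y ∉ Z1 := fun h => hy2 (hZ1V2 y h)
  have hyZ2 : y ∉ Z2 := fun h => hy2 (hZ2V2 y h)
  have hxz : x ≠ z := fun h => hx2 (h ▸ hz2)
  have hyz : y ≠ z := fun h => hy2 (h ▸ hz2)
  -- the joint extension colouring of D2 at z with parts Z1 and Z2
  have extZ : ∃ (c2 : ℕ → Fin 3) (f : Fin 3 → Fin 3), Function.Bijective f ∧
      (∀ u w, D2.Adj u w → u ≠ z → w ≠ z → c2 u ≠ c2 w) ∧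
      (∀ w ∈ Z1, c2 w ≠ f 0) ∧ (∀ w ∈ Z2, c2 w ≠ f 1) := by
    obtain ⟨c2, f, hfbij, hprop, hparts⟩ := h2.ext z hz2 ![Z1, Z2, ∅]
      (by intro i
          fin_cases i
          · exact hZ1sub
          · exact hZ2sub
          · exact Set.empty_subset _)
      (by intro i j hij
          fin_cases i <;> fin_cases j <;>
            first
              | exact absurd rfl hij
              | exact hZd
              | exact hZd.symm
              | exact Set.disjoint_empty _
              | exact Set.empty_disjoint _)
      (by intro i
          obtain ⟨w1, hw1⟩ := hZ1ne
          obtain ⟨w2, hw2⟩ := hZ2ne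
          fin_cases i
          · intro hcon
            have hcon' : Z1 = {w | D2.Adj z w} := hcon
            exact (Set.disjoint_right.mp hZd hw2) (hcon' ▸ hZ2sub hw2)
          · intro hcon
            have hcon' : Z2 = {w | D2.Adj z w} := hcon
            exact (Set.disjoint_left.mp hZd hw1) (hcon' ▸ hZ1sub hw1)
          · intro hcon
            have hcon' : (∅ : Set ℕ) = {w | D2.Adj z w} := hcon
            exact (hcon' ▸ hZ1sub hw1 : w1 ∈ (∅ : Set ℕ)))
    exact ⟨c2, f, hfbij, hprop, fun w hw => hparts 0 w hw, fun w hw => hparts 1 w hw⟩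
  constructor
  · -- bidirected
    intro u v huv
    rw [hAdj] at huv
    rw [hAdj]
    rcases huv with ⟨h, hn1, hn2⟩ | ⟨h, hu, hv⟩ | ⟨rfl, hv1, hzv⟩ | ⟨rfl, hu1, huz⟩ |
      ⟨rfl, hv2, hzv⟩ | ⟨rfl, hu2, huz⟩
    · exact Or.inl ⟨bid1 h, fun ⟨ha, hb⟩ => hn2 ⟨hb, ha⟩, fun ⟨ha, hb⟩ => hn1 ⟨hb, ha⟩⟩
    · exact Or.inr (Or.inl ⟨bid2 h, hv, hu⟩)
    · exact Or.inr (Or.inr (Or.inr (Or.inl ⟨rfl, hv1, bid2 hzv⟩)))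
    · exact Or.inr (Or.inr (Or.inl ⟨rfl, hu1, bid2 huz⟩))
    · exact Or.inr (Or.inr (Or.inr (Or.inr (Or.inr ⟨rfl, hv2, bid2 hzv⟩))))
    · exact Or.inr (Or.inr (Or.inr (Or.inr (Or.inl ⟨rfl, hu2, bid2 huz⟩))))
  · -- nonempty
    exact ⟨x, by rw [hVerts]; exact Finset.mem_union_left _ hx1⟩
  · -- not 3-dicolourable
    rintro ⟨φ, hφ⟩
    by_cases hxyc : φ x = φ y
    · apply h2.not3
      refine ⟨fun w => if w = z then φ x else φ w, isDicol_of_proper ?_⟩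
      intro u v huv he
      by_cases hu : u = z <;> by_cases hv : v = z
      · subst hu; subst hv; exact D2.adj_irrefl _ huv
      · subst hu
        rw [if_pos rfl, if_neg hv] at he
        have hvZ : v ∈ Z1 ∪ Z2 := hZun ▸ huv
        rcases hvZ with hv1 | hv2
        · exact no_digon hφ
            (show D.Adj x v by rw [hAdj]; exact Or.inr (Or.inr (Or.inl ⟨rfl, hv1, huv⟩)))
            (show D.Adj v x by rw [hAdj]; exact Or.inr (Or.inr (Or.inr (Or.inl ⟨rfl, hv1, bid2 huv⟩)))) he
        · exact no_digon hφ
            (show D.Adj y v by rw [hAdj]; exact Or.inr (Or.inr (Or.inr (Or.inr (Or.inl ⟨rfl, hv2, huv⟩)))))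
            (show D.Adj v y by rw [hAdj]; exact Or.inr (Or.inr (Or.inr (Or.inr (Or.inr ⟨rfl, hv2, bid2 huv⟩)))))
            (hxyc.symm.trans he)
      · subst hv
        rw [if_pos rfl, if_neg hu] at he
        have huZ : u ∈ Z1 ∪ Z2 := hZun ▸ (bid2 huv)
        rcases huZ with hu1 | hu2
        · exact no_digon hφ
            (show D.Adj u x by rw [hAdj]; exact Or.inr (Or.inr (Or.inr (Or.inl ⟨rfl, hu1, huv⟩))))
            (show D.Adj x u by rw [hAdj]; exact Or.inr (Or.inr (Or.inl ⟨rfl, hu1, bid2 huv⟩))) he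
        · exact no_digon hφ
            (show D.Adj u y by rw [hAdj]; exact Or.inr (Or.inr (Or.inr (Or.inr (Or.inr ⟨rfl, hu2, huv⟩)))))
            (show D.Adj y u by rw [hAdj]; exact Or.inr (Or.inr (Or.inr (Or.inr (Or.inl ⟨rfl, hu2, bid2 huv⟩)))))
            (he.trans hxyc)
      · rw [if_neg hu, if_neg hv] at he
        exact no_digon hφ
          (show D.Adj u v by rw [hAdj]; exact Or.inr (Or.inl ⟨huv, hu, hv⟩))
          (show D.Adj v u by rw [hAdj]; exact Or.inr (Or.inl ⟨bid2 huv, hv, hu⟩)) he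
    · apply h1.not3
      refine ⟨φ, isDicol_of_proper ?_⟩
      intro u v huv he
      by_cases hd1 : u = x ∧ v = y
      · exact hxyc (hd1.1 ▸ hd1.2 ▸ he)
      · by_cases hd2 : u = y ∧ v = x
        · exact hxyc (hd2.2 ▸ hd2.1 ▸ he.symm)
        · refine no_digon hφ
            (show D.Adj u v by rw [hAdj]; exact Or.inl ⟨huv, hd1, hd2⟩)
            (show D.Adj v u by
              rw [hAdj]
              exact Or.inl ⟨bid1 huv, fun hh => hd2 ⟨hh.2, hh.1⟩, fun hh => hd1 ⟨hh.2, hh.1⟩⟩) he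
  · -- arc defect
    intro a b hab
    obtain ⟨cd1, hcd1e, hcd1⟩ := h1.defArcForced hxyAdj
    rw [hAdj] at hab
    rcases hab with ⟨h, hn1, hn2⟩ | ⟨h, haz, hbz⟩ | ⟨hax, hb1, hzb⟩ | ⟨hbx, ha1, haz2⟩ |
      ⟨hay, hb2, hzb⟩ | ⟨hby, ha2, haz2⟩
    · -- arc inside D1
      obtain ⟨c1, hc1⟩ := h1.defArc a b h
      have hc1xy : c1 x ≠ c1 y := by
        intro he
        rcases hc1 x y hxyAdj he with ⟨h1', h2'⟩ | ⟨h1', h2'⟩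
        · exact hn1 ⟨h1'.symm, h2'.symm⟩
        · exact hn2 ⟨h2'.symm, h1'.symm⟩
      obtain ⟨c2, f, hfbij, hprop2, hZ1P, hZ2P⟩ := extZ
      have hf01 : f 0 ≠ f 1 := fun hf => (by decide : (0 : Fin 3) ≠ 1) (hfbij.injective hf)
      obtain ⟨σ, hσbij, hσx, hσy⟩ := exists_perm_pair (c1 x) (c1 y) (f 0) (f 1) hc1xy hf01
      refine ⟨fun w => if w ∈ D2.verts then c2 w else σ (c1 w), ?_⟩
      refine glue_mono hdisj hx1 hy1 hZ1sub hZ2sub hAdj (fun w => σ (c1 w)) c2 _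
        ?_ ?_ ?_ ?_
      · exact fun u v h' _ _ he => hc1 u v h' (hσbij.injective he)
      · exact fun u v h' hu hv he => absurd he (hprop2 u v h' hu hv)
      · exact fun w hw he => absurd (he.symm.trans hσx) (hZ1P w hw)
      · exact fun w hw he => absurd (he.symm.trans hσy) (hZ2P w hw)
    · -- arc inside D2
      obtain ⟨c2, hc2⟩ := h2.defArc a b h
      have hzp : ∀ w, D2.Adj z w → c2 z ≠ c2 w := by
        intro w hzw he
        rcases hc2 z w hzw he with ⟨h1', _⟩ | ⟨h1', _⟩
        · exact haz h1'.symm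
        · exact hbz h1'.symm
      obtain ⟨σ, hσbij, hσ⟩ := exists_perm_one (cd1 x) (c2 z)
      refine ⟨fun w => if w ∈ D2.verts then c2 w else σ (cd1 w), ?_⟩
      refine glue_mono hdisj hx1 hy1 hZ1sub hZ2sub hAdj (fun w => σ (cd1 w)) c2 _
        ?_ ?_ ?_ ?_
      · intro u v h' hn1' hn2' he
        rcases hcd1 u v h' (hσbij.injective he) with hh | hh
        · exact absurd hh hn1'
        · exact absurd hh hn2'
      · exact fun u v h' _ _ he => hc2 u v h' he
      · exact fun w hw he => absurd (hσ.symm.trans he) (hzp w (hZ1sub hw))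
      · intro w hw he
        have he' : σ (cd1 x) = c2 w := by rw [hcd1e]; exact he
        exact absurd (hσ.symm.trans he') (hzp w (hZ2sub hw))
    · -- cross arc x → Z1
      obtain rfl := hax.symm
      have hbz' : b ≠ z := fun hh => D2.adj_irrefl z (hh ▸ hzb)
      obtain ⟨c2, hc2e, hc2⟩ := h2.defArcForced hzb
      obtain ⟨σ, hσbij, hσ⟩ := exists_perm_one (cd1 x) (c2 z)
      refine ⟨fun w => if w ∈ D2.verts then c2 w else σ (cd1 w), ?_⟩
      refine glue_mono hdisj hx1 hy1 hZ1sub hZ2sub hAdj (fun w => σ (cd1 w)) c2 _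
        ?_ ?_ ?_ ?_
      · intro u v h' hn1' hn2' he
        rcases hcd1 u v h' (hσbij.injective he) with hh | hh
        · exact absurd hh hn1'
        · exact absurd hh hn2'
      · intro u v h' hu hv he
        rcases hc2 u v h' he with ⟨h1', _⟩ | ⟨_, h2'⟩
        · exact absurd h1' hu
        · exact absurd h2' hv
      · intro w hw he
        rcases hc2 z w (hZ1sub hw) (hσ.symm.trans he) with ⟨_, h2'⟩ | ⟨h1', _⟩
        · exact ⟨Or.inl ⟨rfl, h2'⟩, Or.inr ⟨h2', rfl⟩⟩
        · exact absurd h1'.symm hbz'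
      · intro w hw he
        have he' : σ (cd1 x) = c2 w := by rw [hcd1e]; exact he
        rcases hc2 z w (hZ2sub hw) (hσ.symm.trans he') with ⟨_, h2'⟩ | ⟨h1', _⟩
        · exact absurd hb1 (Set.disjoint_right.mp hZd (h2' ▸ hw))
        · exact absurd h1'.symm hbz'
    · -- cross arc Z1 → x
      obtain rfl := hbx.symm
      have haz' : a ≠ z := by
        intro hh
        rw [hh] at haz2
        exact D2.adj_irrefl z haz2
      obtain ⟨c2, hc2e, hc2⟩ := h2.defArcForced (bid2 haz2)
      obtain ⟨σ, hσbij, hσ⟩ := exists_perm_one (cd1 x) (c2 z)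
      refine ⟨fun w => if w ∈ D2.verts then c2 w else σ (cd1 w), ?_⟩
      refine glue_mono hdisj hx1 hy1 hZ1sub hZ2sub hAdj (fun w => σ (cd1 w)) c2 _
        ?_ ?_ ?_ ?_
      · intro u v h' hn1' hn2' he
        rcases hcd1 u v h' (hσbij.injective he) with hh | hh
        · exact absurd hh hn1'
        · exact absurd hh hn2'
      · intro u v h' hu hv he
        rcases hc2 u v h' he with ⟨h1', _⟩ | ⟨_, h2'⟩
        · exact absurd h1' hu
        · exact absurd h2' hv
      · intro w hw he
        rcases hc2 z w (hZ1sub hw) (hσ.symm.trans he) with ⟨_, h2'⟩ | ⟨h1', _⟩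
        · exact ⟨Or.inr ⟨rfl, h2'⟩, Or.inl ⟨h2', rfl⟩⟩
        · exact absurd h1'.symm haz'
      · intro w hw he
        have he' : σ (cd1 x) = c2 w := by rw [hcd1e]; exact he
        rcases hc2 z w (hZ2sub hw) (hσ.symm.trans he') with ⟨_, h2'⟩ | ⟨h1', _⟩
        · exact absurd ha1 (Set.disjoint_right.mp hZd (h2' ▸ hw))
        · exact absurd h1'.symm haz'
    · -- cross arc y → Z2
      obtain rfl := hay.symm
      have hbz' : b ≠ z := fun hh => D2.adj_irrefl z (hh ▸ hzb)
      obtain ⟨c2, hc2e, hc2⟩ := h2.defArcForced hzb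
      obtain ⟨σ, hσbij, hσ⟩ := exists_perm_one (cd1 x) (c2 z)
      refine ⟨fun w => if w ∈ D2.verts then c2 w else σ (cd1 w), ?_⟩
      refine glue_mono hdisj hx1 hy1 hZ1sub hZ2sub hAdj (fun w => σ (cd1 w)) c2 _
        ?_ ?_ ?_ ?_
      · intro u v h' hn1' hn2' he
        rcases hcd1 u v h' (hσbij.injective he) with hh | hh
        · exact absurd hh hn1'
        · exact absurd hh hn2'
      · intro u v h' hu hv he
        rcases hc2 u v h' he with ⟨h1', _⟩ | ⟨_, h2'⟩
        · exact absurd h1' hu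
        · exact absurd h2' hv
      · intro w hw he
        rcases hc2 z w (hZ1sub hw) (hσ.symm.trans he) with ⟨_, h2'⟩ | ⟨h1', _⟩
        · exact absurd hb2 (Set.disjoint_left.mp hZd (h2' ▸ hw))
        · exact absurd h1'.symm hbz'
      · intro w hw he
        have he' : σ (cd1 x) = c2 w := by rw [hcd1e]; exact he
        rcases hc2 z w (hZ2sub hw) (hσ.symm.trans he') with ⟨_, h2'⟩ | ⟨h1', _⟩
        · exact ⟨Or.inl ⟨rfl, h2'⟩, Or.inr ⟨h2', rfl⟩⟩
        · exact absurd h1'.symm hbz'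
    · -- cross arc Z2 → y
      obtain rfl := hby.symm
      have haz' : a ≠ z := by
        intro hh
        rw [hh] at haz2
        exact D2.adj_irrefl z haz2
      obtain ⟨c2, hc2e, hc2⟩ := h2.defArcForced (bid2 haz2)
      obtain ⟨σ, hσbij, hσ⟩ := exists_perm_one (cd1 x) (c2 z)
      refine ⟨fun w => if w ∈ D2.verts then c2 w else σ (cd1 w), ?_⟩
      refine glue_mono hdisj hx1 hy1 hZ1sub hZ2sub hAdj (fun w => σ (cd1 w)) c2 _
        ?_ ?_ ?_ ?_
      · intro u v h' hn1' hn2' he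
        rcases hcd1 u v h' (hσbij.injective he) with hh | hh
        · exact absurd hh hn1'
        · exact absurd hh hn2'
      · intro u v h' hu hv he
        rcases hc2 u v h' he with ⟨h1', _⟩ | ⟨_, h2'⟩
        · exact absurd h1' hu
        · exact absurd h2' hv
      · intro w hw he
        rcases hc2 z w (hZ1sub hw) (hσ.symm.trans he) with ⟨_, h2'⟩ | ⟨h1', _⟩
        · exact absurd ha2 (Set.disjoint_left.mp hZd (h2' ▸ hw))
        · exact absurd h1'.symm haz'
      · intro w hw he
        have he' : σ (cd1 x) = c2 w := by rw [hcd1e]; exact he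
        rcases hc2 z w (hZ2sub hw) (hσ.symm.trans he') with ⟨_, h2'⟩ | ⟨h1', _⟩
        · exact ⟨Or.inr ⟨rfl, h2'⟩, Or.inl ⟨h2', rfl⟩⟩
        · exact absurd h1'.symm haz'
  · -- vertex defect
    intro t ht
    obtain ⟨cd1, hcd1e, hcd1⟩ := h1.defArcForced hxyAdj
    rw [hVerts] at ht
    rcases Finset.mem_union.mp ht with ht1 | ht2
    · by_cases htx : t = x
      · obtain rfl := htx.symm
        obtain ⟨c1, hc1⟩ := h1.defVtx x hx1
        obtain ⟨c2, f, hfbij, hprop2, hZ1P, hZ2P⟩ := extZ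
        obtain ⟨σ, hσbij, hσ⟩ := exists_perm_one (c1 y) (f 1)
        refine ⟨fun w => if w ∈ D2.verts then c2 w else σ (c1 w), ?_⟩
        refine glue_mono hdisj hx1 hy1 hZ1sub hZ2sub hAdj (fun w => σ (c1 w)) c2 _
          ?_ ?_ ?_ ?_
        · exact fun u v h' _ _ he => hc1 u v h' (hσbij.injective he)
        · exact fun u v h' hu hv he => absurd he (hprop2 u v h' hu hv)
        · exact fun w hw he => ⟨Or.inl rfl, Or.inr rfl⟩
        · exact fun w hw he => False.elim (absurd (he.symm.trans hσ) (hZ2P w hw))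
      · by_cases hty : t = y
        · obtain rfl := hty.symm
          obtain ⟨c1, hc1⟩ := h1.defVtx y hy1
          obtain ⟨c2, f, hfbij, hprop2, hZ1P, hZ2P⟩ := extZ
          obtain ⟨σ, hσbij, hσ⟩ := exists_perm_one (c1 x) (f 0)
          refine ⟨fun w => if w ∈ D2.verts then c2 w else σ (c1 w), ?_⟩
          refine glue_mono hdisj hx1 hy1 hZ1sub hZ2sub hAdj (fun w => σ (c1 w)) c2 _
            ?_ ?_ ?_ ?_
          · exact fun u v h' _ _ he => hc1 u v h' (hσbij.injective he)
          · exact fun u v h' hu hv he => absurd he (hprop2 u v h' hu hv)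
          · exact fun w hw he => False.elim (absurd (he.symm.trans hσ) (hZ1P w hw))
          · exact fun w hw he => ⟨Or.inl rfl, Or.inr rfl⟩
        · obtain ⟨c1, hc1⟩ := h1.defVtx t ht1
          have hc1xy : c1 x ≠ c1 y := by
            intro he
            rcases hc1 x y hxyAdj he with hh | hh
            · exact htx hh.symm
            · exact hty hh.symm
          obtain ⟨c2, f, hfbij, hprop2, hZ1P, hZ2P⟩ := extZ
          have hf01 : f 0 ≠ f 1 := fun hf =>
            (by decide : (0 : Fin 3) ≠ 1) (hfbij.injective hf)
          obtain ⟨σ, hσbij, hσx, hσy⟩ :=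
            exists_perm_pair (c1 x) (c1 y) (f 0) (f 1) hc1xy hf01
          refine ⟨fun w => if w ∈ D2.verts then c2 w else σ (c1 w), ?_⟩
          refine glue_mono hdisj hx1 hy1 hZ1sub hZ2sub hAdj (fun w => σ (c1 w)) c2 _
            ?_ ?_ ?_ ?_
          · exact fun u v h' _ _ he => hc1 u v h' (hσbij.injective he)
          · exact fun u v h' hu hv he => absurd he (hprop2 u v h' hu hv)
          · exact fun w hw he => False.elim (absurd (he.symm.trans hσx) (hZ1P w hw))
          · exact fun w hw he => False.elim (absurd (he.symm.trans hσy) (hZ2P w hw))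
    · have htz : t ≠ z := (Finset.mem_erase.mp ht2).1
      have htV2 : t ∈ D2.verts := (Finset.mem_erase.mp ht2).2
      obtain ⟨c2, hc2⟩ := h2.defVtx t htV2
      have hzp : ∀ w, D2.Adj z w → w ≠ t → c2 z ≠ c2 w := by
        intro w hzw hwt he
        rcases hc2 z w hzw he with hh | hh
        · exact htz hh.symm
        · exact hwt hh
      obtain ⟨σ, hσbij, hσ⟩ := exists_perm_one (cd1 x) (c2 z)
      refine ⟨fun w => if w ∈ D2.verts then c2 w else σ (cd1 w), ?_⟩
      refine glue_mono hdisj hx1 hy1 hZ1sub hZ2sub hAdj (fun w => σ (cd1 w)) c2 _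
        ?_ ?_ ?_ ?_
      · intro u v h' hn1' hn2' he
        rcases hcd1 u v h' (hσbij.injective he) with hh | hh
        · exact absurd hh hn1'
        · exact absurd hh hn2'
      · exact fun u v h' _ _ he => hc2 u v h' he
      · intro w hw he
        by_cases hwt : w = t
        · exact ⟨Or.inr hwt, Or.inl hwt⟩
        · exact False.elim (absurd (hσ.symm.trans he) (hzp w (hZ1sub hw) hwt))
      · intro w hw he
        have he' : σ (cd1 x) = c2 w := by rw [hcd1e]; exact he
        by_cases hwt : w = t
        · exact ⟨Or.inr hwt, Or.inl hwt⟩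
        · exact False.elim (absurd (hσ.symm.trans he') (hzp w (hZ2sub hw) hwt))
  · -- ext
    intro v hv P hPsub hPdisj hPne
    rw [hVerts] at hv
    rcases Finset.mem_union.mp hv with hv1 | hv2'
    · by_cases hvx : v = x
      · -- v = x
        obtain rfl := hvx.symm
        have hNx : ∀ w, D.Adj x w ↔ ((D1.Adj x w ∧ w ≠ y) ∨ w ∈ Z1) := by
          intro w
          rw [hAdj]
          constructor
          · rintro (⟨h, hn1, _⟩ | ⟨h, _, _⟩ | ⟨_, hwZ, _⟩ | ⟨hwx, hxZ, _⟩ |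
              ⟨hxy', _, _⟩ | ⟨hwy, hxZ, _⟩)
            · exact Or.inl ⟨h, fun hh => hn1 ⟨rfl, hh⟩⟩
            · exact absurd (D2.adj_mem h).1 hx2
            · exact Or.inr hwZ
            · exact absurd hxZ hxZ1
            · exact absurd hxy' hxy
            · exact absurd hxZ hxZ2
          · rintro (⟨h, hwy⟩ | hwZ)
            · exact Or.inl ⟨h, fun hh => hwy hh.2, fun hh => hxy hh.1⟩
            · exact Or.inr (Or.inr (Or.inl ⟨rfl, hwZ, hZ1sub hwZ⟩))
        have hyP : ∀ i, y ∉ P i := by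
          intro i hy'
          rcases (hNx y).mp (hPsub i hy') with ⟨_, hne⟩ | hZ
          · exact hne rfl
          · exact hyZ1 hZ
        set Q : Fin 3 → Set ℕ := fun i => {w | w ∈ P i ∧ D1.Adj x w} with hQdef
        have hQmem : ∀ i w, w ∈ Q i ↔ (w ∈ P i ∧ D1.Adj x w) := by
          intro i w; rw [hQdef]; rfl
        have hsplit : ∀ i, ∀ w ∈ P i, w ∈ Q i ∨ w ∈ Z1 := by
          intro i w hw
          rcases (hNx w).mp (hPsub i hw) with ⟨h, _⟩ | hZ
          · exact Or.inl ((hQmem i w).mpr ⟨hw, h⟩)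
          · exact Or.inr hZ
        have hQsub : ∀ i, Q i ⊆ {w | D1.Adj x w} :=
          fun i w hw => ((hQmem i w).mp hw).2
        have hQdisj : ∀ i j, i ≠ j → Disjoint (Q i) (Q j) := by
          intro i j hij
          rw [Set.disjoint_left]
          intro w hwi hwj
          exact Set.disjoint_left.mp (hPdisj i j hij)
            ((hQmem i w).mp hwi).1 ((hQmem j w).mp hwj).1
        have hQy : ∀ i, y ∉ Q i := fun i h => hyP i ((hQmem i y).mp h).1
        have hQne : ∀ i, Q i ≠ {w | D1.Adj x w} :=
          fun i hcon => hQy i (by rw [hcon]; exact hxyAdj)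
        obtain ⟨c2, f, hfbij, hprop2, hZ1P, hZ2P⟩ := extZ
        have hf01 : f 0 ≠ f 1 := fun hf =>
          (by decide : (0 : Fin 3) ≠ 1) (hfbij.injective hf)
        by_cases hbr : ∃ k, Z1 ⊆ P k
        · -- some part contains all of Z1
          obtain ⟨k, hk⟩ := hbr
          set Q' : Fin 3 → Set ℕ := fun i => if i = k then Q k ∪ {y} else Q i
            with hQ'def
          have hmemQ' : ∀ l w, w ∈ Q' l → w ∈ Q l ∨ (w = y ∧ l = k) := by
            intro l w hl
            by_cases hlk : l = k
            · rw [hQ'def] at hl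
              simp only [if_pos hlk] at hl
              rcases hl with h | h
              · rw [hlk]; exact Or.inl h
              · exact Or.inr ⟨h, hlk⟩
            · rw [hQ'def] at hl
              simp only [if_neg hlk] at hl
              exact Or.inl hl
          obtain ⟨c1, e, hebij, hprop1, hparts1⟩ := h1.ext x hx1 Q'
            (by intro i w hw
                rcases hmemQ' i w hw with h | ⟨rfl, _⟩
                · exact hQsub i h
                · exact hxyAdj)
            (by intro i j hij
                rw [Set.disjoint_left]
                intro w hwi hwj
                rcases hmemQ' i w hwi with hQi | ⟨hwy1, hik⟩
                · rcases hmemQ' j w hwj with hQj | ⟨hwy2, hjk⟩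
                  · exact Set.disjoint_left.mp (hQdisj i j hij) hQi hQj
                  · exact hQy i (hwy2 ▸ hQi)
                · rcases hmemQ' j w hwj with hQj | ⟨hwy2, hjk⟩
                  · exact hQy j (hwy1 ▸ hQj)
                  · exact hij (hik.trans hjk.symm))
            (by intro i
                by_cases hik : i = k
                · intro hcon
                  rw [hQ'def] at hcon
                  simp only [if_pos hik] at hcon
                  apply hPne k
                  ext w
                  simp only [Set.mem_setOf_eq]
                  constructor
                  · intro hw; exact hPsub k hw
                  · intro hw
                    rcases (hNx w).mp hw with ⟨h, hwy'⟩ | hZ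
                    · have hwm : w ∈ Q k ∪ {y} := by rw [hcon]; exact h
                      rcases hwm with h' | h'
                      · exact ((hQmem k w).mp h').1
                      · exact absurd h' hwy'
                    · exact hk hZ
                · intro hcon
                  rw [hQ'def] at hcon
                  simp only [if_neg hik] at hcon
                  exact hQne i hcon)
          have hek : e k ≠ c1 y := by
            intro hh
            have hyQ'k : y ∈ Q' k := by
              rw [hQ'def]; simp only [if_pos rfl]; exact Or.inr rfl
            exact hparts1 k y hyQ'k hh.symm
          obtain ⟨σ, hσbij, hσ1, hσ2⟩ :=
            exists_perm_pair (e k) (c1 y) (f 0) (f 1) hek hf01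
          have hglue := glue_mono hdisj hx1 hy1 hZ1sub hZ2sub hAdj
            (fun w => σ (c1 w)) c2 (fun u w => u = x ∨ w = x)
            (by intro u w h' _ _ he
                by_cases hu : u = x
                · exact Or.inl hu
                · by_cases hw : w = x
                  · exact Or.inr hw
                  · exact False.elim (hprop1 u w h' hu hw (hσbij.injective he)))
            (fun u w h' hu hw he => False.elim (hprop2 u w h' hu hw he))
            (fun w hw he => ⟨Or.inl rfl, Or.inr rfl⟩)
            (fun w hw he => False.elim (hZ2P w hw (he.symm.trans hσ2)))
          refine ⟨fun w => if w ∈ D2.verts then c2 w else σ (c1 w),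
            fun i => σ (e i), hσbij.comp hebij, ?_, ?_⟩
          · intro u w huw hune hwne hcc
            rcases hglue u w huw hcc with hh | hh
            · exact hune hh
            · exact hwne hh
          · intro i w hw hcc
            rcases hsplit i w hw with hQ | hZ
            · have hw1 : D1.Adj x w := ((hQmem i w).mp hQ).2
              have hwn2 : w ∉ D2.verts :=
                Finset.disjoint_left.mp hdisj (D1.adj_mem hw1).2
              have hcc' : σ (c1 w) = σ (e i) := by simpa [if_neg hwn2] using hcc
              have hwQ' : w ∈ Q' i := by
                rw [hQ'def]
                by_cases hik : i = k
                · simp only [if_pos hik]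
                  rw [hik] at hQ
                  exact Or.inl hQ
                · simp only [if_neg hik]
                  exact hQ
              exact hparts1 i w hwQ' (hσbij.injective hcc')
            · have hik : i = k := by
                by_contra hik
                exact Set.disjoint_left.mp (hPdisj i k hik) hw (hk hZ)
              have hwV2 : w ∈ D2.verts := hZ1V2 w hZ
              have hcc' : c2 w = σ (e i) := by simpa [if_pos hwV2] using hcc
              rw [hik] at hcc'
              exact hZ1P w hZ (hcc'.trans hσ1)
        · -- no part contains all of Z1
          obtain ⟨c1, e, hebij, hprop1, hparts1⟩ := h1.ext x hx1 Q hQsub hQdisj hQne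
          obtain ⟨j, hj⟩ := hebij.surjective (c1 y)
          set R : Fin 3 → Set ℕ := fun i => (P i ∩ Z1) ∪ (if i = j then Z2 else ∅)
            with hRdef
          have hmemR : ∀ l w, w ∈ R l ↔ ((w ∈ P l ∧ w ∈ Z1) ∨ (w ∈ Z2 ∧ l = j)) := by
            intro l w
            rw [hRdef]
            by_cases hlj : l = j
            · simp only [if_pos hlj, Set.mem_union, Set.mem_inter_iff]
              constructor
              · rintro (h | h)
                · exact Or.inl h
                · exact Or.inr ⟨h, hlj⟩
              · rintro (h | ⟨h, _⟩)
                · exact Or.inl h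
                · exact Or.inr h
            · simp only [if_neg hlj, Set.mem_union, Set.mem_inter_iff,
                Set.mem_empty_iff_false, or_false]
              constructor
              · exact Or.inl
              · rintro (h | ⟨_, h⟩)
                · exact h
                · exact absurd h hlj
          obtain ⟨c2', f', hfbij', hprop2', hparts2'⟩ := h2.ext z hz2 R
            (by intro i w hw
                rcases (hmemR i w).mp hw with ⟨_, h⟩ | ⟨h, _⟩
                · exact hZ1sub h
                · exact hZ2sub h)
            (by intro i j' hij'
                rw [Set.disjoint_left]
                intro w hwi hwj
                rcases (hmemR i w).mp hwi with ⟨hPi, hZ1i⟩ | ⟨hZ2i, hij2⟩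
                · rcases (hmemR j' w).mp hwj with ⟨hPj, _⟩ | ⟨hZ2j, _⟩
                  · exact Set.disjoint_left.mp (hPdisj i j' hij') hPi hPj
                  · exact Set.disjoint_left.mp hZd hZ1i hZ2j
                · rcases (hmemR j' w).mp hwj with ⟨_, hZ1j⟩ | ⟨_, hjj⟩
                  · exact Set.disjoint_left.mp hZd hZ1j hZ2i
                  · exact hij' (hij2.trans hjj.symm))
            (by intro i hcon
                by_cases hij : i = j
                · have hns : ¬ Z1 ⊆ P j := fun hsub => hbr ⟨j, hsub⟩
                  obtain ⟨w1, hw1Z, hw1P⟩ := Set.not_subset.mp hns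
                  have hw1R : w1 ∈ R i := by rw [hcon]; exact hZ1sub hw1Z
                  rcases (hmemR i w1).mp hw1R with ⟨hP, _⟩ | ⟨hZ2', _⟩
                  · rw [hij] at hP
                    exact hw1P hP
                  · exact Set.disjoint_left.mp hZd hw1Z hZ2'
                · obtain ⟨w2, hw2⟩ := hZ2ne
                  have hw2R : w2 ∈ R i := by rw [hcon]; exact hZ2sub hw2
                  rcases (hmemR i w2).mp hw2R with ⟨_, hZ1'⟩ | ⟨_, hij2⟩
                  · exact Set.disjoint_right.mp hZd hw2 hZ1'
                  · exact hij hij2)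
          obtain ⟨σ, hσbij, hσ⟩ := exists_perm_comp hebij hfbij'
          have hσy : σ (c1 y) = f' j := by rw [← hj]; exact hσ j
          have hglue := glue_mono hdisj hx1 hy1 hZ1sub hZ2sub hAdj
            (fun w => σ (c1 w)) c2' (fun u w => u = x ∨ w = x)
            (by intro u w h' _ _ he
                by_cases hu : u = x
                · exact Or.inl hu
                · by_cases hw : w = x
                  · exact Or.inr hw
                  · exact False.elim (hprop1 u w h' hu hw (hσbij.injective he)))
            (fun u w h' hu hw he => False.elim (hprop2' u w h' hu hw he))
            (fun w hw he => ⟨Or.inl rfl, Or.inr rfl⟩)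
            (by intro w hw he
                have hwR : w ∈ R j := (hmemR j w).mpr (Or.inr ⟨hw, rfl⟩)
                exact False.elim (hparts2' j w hwR (he.symm.trans hσy)))
          refine ⟨fun w => if w ∈ D2.verts then c2' w else σ (c1 w),
            f', hfbij', ?_, ?_⟩
          · intro u w huw hune hwne hcc
            rcases hglue u w huw hcc with hh | hh
            · exact hune hh
            · exact hwne hh
          · intro i w hw hcc
            rcases hsplit i w hw with hQ | hZ
            · have hw1 : D1.Adj x w := ((hQmem i w).mp hQ).2
              have hwn2 : w ∉ D2.verts :=
                Finset.disjoint_left.mp hdisj (D1.adj_mem hw1).2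
              have hcc' : σ (c1 w) = f' i := by simpa [if_neg hwn2] using hcc
              rw [← hσ i] at hcc'
              exact hparts1 i w hQ (hσbij.injective hcc')
            · have hwV2 : w ∈ D2.verts := hZ1V2 w hZ
              have hcc' : c2' w = f' i := by simpa [if_pos hwV2] using hcc
              exact hparts2' i w ((hmemR i w).mpr (Or.inl ⟨hw, hZ⟩)) hcc'
      · by_cases hvy : v = y
        · -- v = y
          obtain rfl := hvy.symm
          have hNy : ∀ w, D.Adj y w ↔ ((D1.Adj y w ∧ w ≠ x) ∨ w ∈ Z2) := by
            intro w
            rw [hAdj]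
            constructor
            · rintro (⟨h, _, hn2⟩ | ⟨h, _, _⟩ | ⟨hyx, _, _⟩ | ⟨hwx, hyZ, _⟩ |
                ⟨_, hwZ, _⟩ | ⟨hwy, hyZ, _⟩)
              · exact Or.inl ⟨h, fun hh => hn2 ⟨rfl, hh⟩⟩
              · exact absurd (D2.adj_mem h).1 hy2
              · exact absurd hyx.symm hxy
              · exact absurd hyZ hyZ1
              · exact Or.inr hwZ
              · exact absurd hyZ hyZ2
            · rintro (⟨h, hwx⟩ | hwZ)
              · exact Or.inl ⟨h, fun hh => hxy hh.1.symm, fun hh => hwx hh.2⟩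
              · exact Or.inr (Or.inr (Or.inr (Or.inr (Or.inl ⟨rfl, hwZ, hZ2sub hwZ⟩))))
          have hxP : ∀ i, x ∉ P i := by
            intro i hx'
            rcases (hNy x).mp (hPsub i hx') with ⟨_, hne⟩ | hZ
            · exact hne rfl
            · exact hxZ2 hZ
          set Q : Fin 3 → Set ℕ := fun i => {w | w ∈ P i ∧ D1.Adj y w} with hQdef
          have hQmem : ∀ i w, w ∈ Q i ↔ (w ∈ P i ∧ D1.Adj y w) := by
            intro i w; rw [hQdef]; rfl
          have hsplit : ∀ i, ∀ w ∈ P i, w ∈ Q i ∨ w ∈ Z2 := by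
            intro i w hw
            rcases (hNy w).mp (hPsub i hw) with ⟨h, _⟩ | hZ
            · exact Or.inl ((hQmem i w).mpr ⟨hw, h⟩)
            · exact Or.inr hZ
          have hQsub : ∀ i, Q i ⊆ {w | D1.Adj y w} :=
            fun i w hw => ((hQmem i w).mp hw).2
          have hQdisj : ∀ i j, i ≠ j → Disjoint (Q i) (Q j) := by
            intro i j hij
            rw [Set.disjoint_left]
            intro w hwi hwj
            exact Set.disjoint_left.mp (hPdisj i j hij)
              ((hQmem i w).mp hwi).1 ((hQmem j w).mp hwj).1
          have hQx : ∀ i, x ∉ Q i := fun i h => hxP i ((hQmem i x).mp h).1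
          have hQne : ∀ i, Q i ≠ {w | D1.Adj y w} :=
            fun i hcon => hQx i (by rw [hcon]; exact bid1 hxyAdj)
          obtain ⟨c2, f, hfbij, hprop2, hZ1P, hZ2P⟩ := extZ
          have hf10 : f 1 ≠ f 0 := fun hf =>
            (by decide : (1 : Fin 3) ≠ 0) (hfbij.injective hf)
          by_cases hbr : ∃ k, Z2 ⊆ P k
          · -- some part contains all of Z2
            obtain ⟨k, hk⟩ := hbr
            set Q' : Fin 3 → Set ℕ := fun i => if i = k then Q k ∪ {x} else Q i
              with hQ'def
            have hmemQ' : ∀ l w, w ∈ Q' l → w ∈ Q l ∨ (w = x ∧ l = k) := by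
              intro l w hl
              by_cases hlk : l = k
              · rw [hQ'def] at hl
                simp only [if_pos hlk] at hl
                rcases hl with h | h
                · rw [hlk]; exact Or.inl h
                · exact Or.inr ⟨h, hlk⟩
              · rw [hQ'def] at hl
                simp only [if_neg hlk] at hl
                exact Or.inl hl
            obtain ⟨c1, e, hebij, hprop1, hparts1⟩ := h1.ext y hy1 Q'
              (by intro i w hw
                  rcases hmemQ' i w hw with h | ⟨rfl, _⟩
                  · exact hQsub i h
                  · exact bid1 hxyAdj)
              (by intro i j hij
                  rw [Set.disjoint_left]
                  intro w hwi hwj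
                  rcases hmemQ' i w hwi with hQi | ⟨hwy1, hik⟩
                  · rcases hmemQ' j w hwj with hQj | ⟨hwy2, hjk⟩
                    · exact Set.disjoint_left.mp (hQdisj i j hij) hQi hQj
                    · exact hQx i (hwy2 ▸ hQi)
                  · rcases hmemQ' j w hwj with hQj | ⟨hwy2, hjk⟩
                    · exact hQx j (hwy1 ▸ hQj)
                    · exact hij (hik.trans hjk.symm))
              (by intro i
                  by_cases hik : i = k
                  · intro hcon
                    rw [hQ'def] at hcon
                    simp only [if_pos hik] at hcon
                    apply hPne k
                    ext w
                    simp only [Set.mem_setOf_eq]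
                    constructor
                    · intro hw; exact hPsub k hw
                    · intro hw
                      rcases (hNy w).mp hw with ⟨h, hwx'⟩ | hZ
                      · have hwm : w ∈ Q k ∪ {x} := by rw [hcon]; exact h
                        rcases hwm with h' | h'
                        · exact ((hQmem k w).mp h').1
                        · exact absurd h' hwx'
                      · exact hk hZ
                  · intro hcon
                    rw [hQ'def] at hcon
                    simp only [if_neg hik] at hcon
                    exact hQne i hcon)
            have hek : e k ≠ c1 x := by
              intro hh
              have hxQ'k : x ∈ Q' k := by
                rw [hQ'def]; simp only [if_pos rfl]; exact Or.inr rfl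
              exact hparts1 k x hxQ'k hh.symm
            obtain ⟨σ, hσbij, hσ1, hσ2⟩ :=
              exists_perm_pair (e k) (c1 x) (f 1) (f 0) hek hf10
            have hglue := glue_mono hdisj hx1 hy1 hZ1sub hZ2sub hAdj
              (fun w => σ (c1 w)) c2 (fun u w => u = y ∨ w = y)
              (by intro u w h' _ _ he
                  by_cases hu : u = y
                  · exact Or.inl hu
                  · by_cases hw : w = y
                    · exact Or.inr hw
                    · exact False.elim (hprop1 u w h' hu hw (hσbij.injective he)))
              (fun u w h' hu hw he => False.elim (hprop2 u w h' hu hw he))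
              (fun w hw he => False.elim (hZ1P w hw (he.symm.trans hσ2)))
              (fun w hw he => ⟨Or.inl rfl, Or.inr rfl⟩)
            refine ⟨fun w => if w ∈ D2.verts then c2 w else σ (c1 w),
              fun i => σ (e i), hσbij.comp hebij, ?_, ?_⟩
            · intro u w huw hune hwne hcc
              rcases hglue u w huw hcc with hh | hh
              · exact hune hh
              · exact hwne hh
            · intro i w hw hcc
              rcases hsplit i w hw with hQ | hZ
              · have hw1 : D1.Adj y w := ((hQmem i w).mp hQ).2
                have hwn2 : w ∉ D2.verts :=
                  Finset.disjoint_left.mp hdisj (D1.adj_mem hw1).2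
                have hcc' : σ (c1 w) = σ (e i) := by simpa [if_neg hwn2] using hcc
                have hwQ' : w ∈ Q' i := by
                  rw [hQ'def]
                  by_cases hik : i = k
                  · simp only [if_pos hik]
                    rw [hik] at hQ
                    exact Or.inl hQ
                  · simp only [if_neg hik]
                    exact hQ
                exact hparts1 i w hwQ' (hσbij.injective hcc')
              · have hik : i = k := by
                  by_contra hik
                  exact Set.disjoint_left.mp (hPdisj i k hik) hw (hk hZ)
                have hwV2 : w ∈ D2.verts := hZ2V2 w hZ
                have hcc' : c2 w = σ (e i) := by simpa [if_pos hwV2] using hcc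
                rw [hik] at hcc'
                exact hZ2P w hZ (hcc'.trans hσ1)
          · -- no part contains all of Z2
            obtain ⟨c1, e, hebij, hprop1, hparts1⟩ := h1.ext y hy1 Q hQsub hQdisj hQne
            obtain ⟨j, hj⟩ := hebij.surjective (c1 x)
            set R : Fin 3 → Set ℕ := fun i => (P i ∩ Z2) ∪ (if i = j then Z1 else ∅)
              with hRdef
            have hmemR : ∀ l w, w ∈ R l ↔ ((w ∈ P l ∧ w ∈ Z2) ∨ (w ∈ Z1 ∧ l = j)) := by
              intro l w
              rw [hRdef]
              by_cases hlj : l = j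
              · simp only [if_pos hlj, Set.mem_union, Set.mem_inter_iff]
                constructor
                · rintro (h | h)
                  · exact Or.inl h
                  · exact Or.inr ⟨h, hlj⟩
                · rintro (h | ⟨h, _⟩)
                  · exact Or.inl h
                  · exact Or.inr h
              · simp only [if_neg hlj, Set.mem_union, Set.mem_inter_iff,
                  Set.mem_empty_iff_false, or_false]
                constructor
                · exact Or.inl
                · rintro (h | ⟨_, h⟩)
                  · exact h
                  · exact absurd h hlj
            obtain ⟨c2', f', hfbij', hprop2', hparts2'⟩ := h2.ext z hz2 R
              (by intro i w hw
                  rcases (hmemR i w).mp hw with ⟨_, h⟩ | ⟨h, _⟩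
                  · exact hZ2sub h
                  · exact hZ1sub h)
              (by intro i j' hij'
                  rw [Set.disjoint_left]
                  intro w hwi hwj
                  rcases (hmemR i w).mp hwi with ⟨hPi, hZ2i⟩ | ⟨hZ1i, hij2⟩
                  · rcases (hmemR j' w).mp hwj with ⟨hPj, _⟩ | ⟨hZ1j, _⟩
                    · exact Set.disjoint_left.mp (hPdisj i j' hij') hPi hPj
                    · exact Set.disjoint_left.mp hZd hZ1j hZ2i
                  · rcases (hmemR j' w).mp hwj with ⟨_, hZ2j⟩ | ⟨_, hjj⟩
                    · exact Set.disjoint_left.mp hZd hZ1i hZ2j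
                    · exact hij' (hij2.trans hjj.symm))
              (by intro i hcon
                  by_cases hij : i = j
                  · have hns : ¬ Z2 ⊆ P j := fun hsub => hbr ⟨j, hsub⟩
                    obtain ⟨w2, hw2Z, hw2P⟩ := Set.not_subset.mp hns
                    have hw2R : w2 ∈ R i := by rw [hcon]; exact hZ2sub hw2Z
                    rcases (hmemR i w2).mp hw2R with ⟨hP, _⟩ | ⟨hZ1', _⟩
                    · rw [hij] at hP
                      exact hw2P hP
                    · exact Set.disjoint_right.mp hZd hw2Z hZ1'
                  · obtain ⟨w1, hw1⟩ := hZ1ne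
                    have hw1R : w1 ∈ R i := by rw [hcon]; exact hZ1sub hw1
                    rcases (hmemR i w1).mp hw1R with ⟨_, hZ2'⟩ | ⟨_, hij2⟩
                    · exact Set.disjoint_left.mp hZd hw1 hZ2'
                    · exact hij hij2)
            obtain ⟨σ, hσbij, hσ⟩ := exists_perm_comp hebij hfbij'
            have hσx : σ (c1 x) = f' j := by rw [← hj]; exact hσ j
            have hglue := glue_mono hdisj hx1 hy1 hZ1sub hZ2sub hAdj
              (fun w => σ (c1 w)) c2' (fun u w => u = y ∨ w = y)
              (by intro u w h' _ _ he
                  by_cases hu : u = y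
                  · exact Or.inl hu
                  · by_cases hw : w = y
                    · exact Or.inr hw
                    · exact False.elim (hprop1 u w h' hu hw (hσbij.injective he)))
              (fun u w h' hu hw he => False.elim (hprop2' u w h' hu hw he))
              (by intro w hw he
                  have hwR : w ∈ R j := (hmemR j w).mpr (Or.inr ⟨hw, rfl⟩)
                  exact False.elim (hparts2' j w hwR (he.symm.trans hσx)))
              (fun w hw he => ⟨Or.inl rfl, Or.inr rfl⟩)
            refine ⟨fun w => if w ∈ D2.verts then c2' w else σ (c1 w),
              f', hfbij', ?_, ?_⟩
            · intro u w huw hune hwne hcc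
              rcases hglue u w huw hcc with hh | hh
              · exact hune hh
              · exact hwne hh
            · intro i w hw hcc
              rcases hsplit i w hw with hQ | hZ
              · have hw1 : D1.Adj y w := ((hQmem i w).mp hQ).2
                have hwn2 : w ∉ D2.verts :=
                  Finset.disjoint_left.mp hdisj (D1.adj_mem hw1).2
                have hcc' : σ (c1 w) = f' i := by simpa [if_neg hwn2] using hcc
                rw [← hσ i] at hcc'
                exact hparts1 i w hQ (hσbij.injective hcc')
              · have hwV2 : w ∈ D2.verts := hZ2V2 w hZ
                have hcc' : c2' w = f' i := by simpa [if_pos hwV2] using hcc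
                exact hparts2' i w ((hmemR i w).mpr (Or.inl ⟨hw, hZ⟩)) hcc'
        · -- v in D1, not x or y
          have hvn2 : v ∉ D2.verts := Finset.disjoint_left.mp hdisj hv1
          have hNv : {w | D.Adj v w} = {w | D1.Adj v w} := by
            ext w
            simp only [Set.mem_setOf_eq]
            rw [hAdj]
            constructor
            · rintro (⟨h, _, _⟩ | ⟨h, _, _⟩ | ⟨h', _, _⟩ | ⟨_, hvZ, _⟩ | ⟨h', _, _⟩ |
                ⟨_, hvZ, _⟩)
              · exact h
              · exact absurd (D2.adj_mem h).1 hvn2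
              · exact absurd h' hvx
              · exact absurd (hZ1V2 v hvZ) hvn2
              · exact absurd h' hvy
              · exact absurd (hZ2V2 v hvZ) hvn2
            · intro h
              exact Or.inl ⟨h, fun hh => hvx hh.1, fun hh => hvy hh.1⟩
          obtain ⟨c1, e, hebij, hprop1, hparts1⟩ := h1.ext v hv1 P
            (fun i => by rw [← hNv]; exact hPsub i)
            hPdisj
            (fun i => by rw [← hNv]; exact hPne i)
          obtain ⟨c2, f, hfbij, hprop2, hZ1P, hZ2P⟩ := extZ
          have hc1xy : c1 x ≠ c1 y :=
            hprop1 x y hxyAdj (fun hh => hvx hh.symm) (fun hh => hvy hh.symm)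
          have hf01 : f 0 ≠ f 1 := fun hf =>
            (by decide : (0 : Fin 3) ≠ 1) (hfbij.injective hf)
          obtain ⟨σ, hσbij, hσx, hσy⟩ :=
            exists_perm_pair (c1 x) (c1 y) (f 0) (f 1) hc1xy hf01
          have hglue := glue_mono hdisj hx1 hy1 hZ1sub hZ2sub hAdj
            (fun w => σ (c1 w)) c2 (fun u w => u = v ∨ w = v)
            (by intro u w h' _ _ he
                by_cases hu : u = v
                · exact Or.inl hu
                · by_cases hw : w = v
                  · exact Or.inr hw
                  · exact False.elim (hprop1 u w h' hu hw (hσbij.injective he)))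
            (fun u w h' hu hw he => False.elim (hprop2 u w h' hu hw he))
            (fun w hw he => False.elim (hZ1P w hw (he.symm.trans hσx)))
            (fun w hw he => False.elim (hZ2P w hw (he.symm.trans hσy)))
          refine ⟨fun w => if w ∈ D2.verts then c2 w else σ (c1 w),
            fun i => σ (e i), hσbij.comp hebij, ?_, ?_⟩
          · intro u w huw hune hwne hcc
            rcases hglue u w huw hcc with hh | hh
            · exact hune hh
            · exact hwne hh
          · intro i w hw hcc
            have hw1 : D1.Adj v w := by
              have := hPsub i hw
              rw [hNv] at this
              exact this
            have hwn2 : w ∉ D2.verts :=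
              Finset.disjoint_left.mp hdisj (D1.adj_mem hw1).2
            have hcc' : σ (c1 w) = σ (e i) := by simpa [if_neg hwn2] using hcc
            exact hparts1 i w hw (hσbij.injective hcc')
    · -- v in D2, not z
      have hvz : v ≠ z := (Finset.mem_erase.mp hv2').1
      have hv2 : v ∈ D2.verts := (Finset.mem_erase.mp hv2').2
      have hvn1 : v ∉ D1.verts := Finset.disjoint_right.mp hdisj hv2
      have hvnx : v ≠ x := fun hh => hx2 (hh ▸ hv2)
      have hvny : v ≠ y := fun hh => hy2 (hh ▸ hv2)
      have hNv : ∀ w, D.Adj v w ↔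
          ((D2.Adj v w ∧ w ≠ z) ∨ (w = x ∧ v ∈ Z1) ∨ (w = y ∧ v ∈ Z2)) := by
        intro w
        rw [hAdj]
        constructor
        · rintro (⟨h, _, _⟩ | ⟨h, _, hwz⟩ | ⟨hvx', _, _⟩ | ⟨hwx, hvZ, _⟩ |
            ⟨hvy', _, _⟩ | ⟨hwy, hvZ, _⟩)
          · exact absurd (D1.adj_mem h).1 hvn1
          · exact Or.inl ⟨h, hwz⟩
          · exact absurd hvx' hvnx
          · exact Or.inr (Or.inl ⟨hwx, hvZ⟩)
          · exact absurd hvy' hvny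
          · exact Or.inr (Or.inr ⟨hwy, hvZ⟩)
        · rintro (⟨h, hwz⟩ | ⟨hwx, hvZ⟩ | ⟨hwy, hvZ⟩)
          · exact Or.inr (Or.inl ⟨h, hvz, hwz⟩)
          · exact Or.inr (Or.inr (Or.inr (Or.inl ⟨hwx, hvZ, bid2 (hZ1sub hvZ)⟩)))
          · exact Or.inr (Or.inr (Or.inr (Or.inr (Or.inr ⟨hwy, hvZ, bid2 (hZ2sub hvZ)⟩))))
      have hzNv : ¬ D.Adj v z := by
        intro h
        rcases (hNv z).mp h with ⟨_, hne⟩ | ⟨hzx, _⟩ | ⟨hzy, _⟩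
        · exact hne rfl
        · exact hxz hzx.symm
        · exact hyz hzy.symm
      have hzP : ∀ i, z ∉ P i := fun i h => hzNv (hPsub i h)
      have hxND : ∀ w, D.Adj v w → w = x → v ∈ Z1 := by
        intro w h hwx
        rcases (hNv w).mp h with ⟨h', _⟩ | ⟨_, h'⟩ | ⟨hxy', _⟩
        · rw [hwx] at h'
          exact absurd (D2.adj_mem h').2 hx2
        · exact h'
        · rw [hwx] at hxy'
          exact absurd hxy' hxy
      have hyND : ∀ w, D.Adj v w → w = y → v ∈ Z2 := by
        intro w h hwy
        rcases (hNv w).mp h with ⟨h', _⟩ | ⟨hxy', _⟩ | ⟨_, h'⟩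
        · rw [hwy] at h'
          exact absurd (D2.adj_mem h').2 hy2
        · rw [hwy] at hxy'
          exact absurd hxy'.symm hxy
        · exact h'
      set P' : Fin 3 → Set ℕ := fun i => {w | w ∈ P i ∧ w ≠ x ∧ w ≠ y} ∪
        (if x ∈ P i ∨ y ∈ P i then {z} else ∅) with hP'def
      have hmemP' : ∀ l w, w ∈ P' l ↔
          ((w ∈ P l ∧ w ≠ x ∧ w ≠ y) ∨ (w = z ∧ (x ∈ P l ∨ y ∈ P l))) := by
        intro l w
        rw [hP'def]
        by_cases hc : x ∈ P l ∨ y ∈ P l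
        · simp only [if_pos hc, Set.mem_union, Set.mem_setOf_eq,
            Set.mem_singleton_iff]
          constructor
          · rintro (h | h)
            · exact Or.inl h
            · exact Or.inr ⟨h, hc⟩
          · rintro (h | ⟨h, _⟩)
            · exact Or.inl h
            · exact Or.inr h
        · simp only [if_neg hc, Set.mem_union, Set.mem_setOf_eq,
            Set.mem_empty_iff_false, or_false]
          constructor
          · exact Or.inl
          · rintro (h | ⟨_, h⟩)
            · exact h
            · exact absurd h hc
      obtain ⟨c2, f, hfbij, hprop2, hparts2⟩ := h2.ext v hv2 P'
        (by intro i w hw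
            rcases (hmemP' i w).mp hw with ⟨hwP, hwx, hwy⟩ | ⟨hwz, hcond⟩
            · rcases (hNv w).mp (hPsub i hwP) with ⟨h, _⟩ | ⟨h', _⟩ | ⟨h', _⟩
              · exact h
              · exact absurd h' hwx
              · exact absurd h' hwy
            · have hadjvz : D2.Adj v z := by
                rcases hcond with hc | hc
                · exact bid2 (hZ1sub (hxND x (hPsub i hc) rfl))
                · exact bid2 (hZ2sub (hyND y (hPsub i hc) rfl))
              show D2.Adj v w
              rw [hwz]
              exact hadjvz)
        (by intro i j hij
            rw [Set.disjoint_left]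
            intro w hwi hwj
            rcases (hmemP' i w).mp hwi with ⟨hPi, _, _⟩ | ⟨hwz, hci⟩
            · rcases (hmemP' j w).mp hwj with ⟨hPj, _, _⟩ | ⟨hwz, _⟩
              · exact Set.disjoint_left.mp (hPdisj i j hij) hPi hPj
              · exact hzP i (hwz ▸ hPi)
            · rcases (hmemP' j w).mp hwj with ⟨hPj, _, _⟩ | ⟨_, hcj⟩
              · exact hzP j (hwz ▸ hPj)
              · rcases hci with hc1 | hc1 <;> rcases hcj with hc2 | hc2
                · exact Set.disjoint_left.mp (hPdisj i j hij) hc1 hc2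
                · exact Set.disjoint_left.mp hZd
                    (hxND x (hPsub i hc1) rfl) (hyND y (hPsub j hc2) rfl)
                · exact Set.disjoint_left.mp hZd
                    (hxND x (hPsub j hc2) rfl) (hyND y (hPsub i hc1) rfl)
                · exact Set.disjoint_left.mp (hPdisj i j hij) hc1 hc2)
        (by intro i hcon
            obtain ⟨t0, ht0, ht0P⟩ := Set.exists_of_ssubset
              ⟨hPsub i, fun hsup => hPne i
                (Set.Subset.antisymm (hPsub i) hsup)⟩
            by_cases ht0x : t0 = x
            · have hvZ1 : v ∈ Z1 := hxND t0 ht0 ht0x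
              have hzmem : z ∈ P' i := by
                rw [hcon]
                exact bid2 (hZ1sub hvZ1)
              rcases (hmemP' i z).mp hzmem with ⟨hzPi, _, _⟩ | ⟨_, hcond⟩
              · exact hzP i hzPi
              · rcases hcond with hc | hc
                · exact ht0P (ht0x ▸ hc)
                · exact Set.disjoint_left.mp hZd hvZ1 (hyND y (hPsub i hc) rfl)
            · by_cases ht0y : t0 = y
              · have hvZ2 : v ∈ Z2 := hyND t0 ht0 ht0y
                have hzmem : z ∈ P' i := by
                  rw [hcon]
                  exact bid2 (hZ2sub hvZ2)
                rcases (hmemP' i z).mp hzmem with ⟨hzPi, _, _⟩ | ⟨_, hcond⟩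
                · exact hzP i hzPi
                · rcases hcond with hc | hc
                  · exact Set.disjoint_left.mp hZd (hxND x (hPsub i hc) rfl) hvZ2
                  · exact ht0P (ht0y ▸ hc)
              · have ht0z : t0 ≠ z := fun hh => hzNv (hh ▸ ht0)
                have hD2t0 : D2.Adj v t0 := by
                  rcases (hNv t0).mp ht0 with ⟨h, _⟩ | ⟨h', _⟩ | ⟨h', _⟩
                  · exact h
                  · exact absurd h' ht0x
                  · exact absurd h' ht0y
                have ht0mem : t0 ∈ P' i := by rw [hcon]; exact hD2t0
                rcases (hmemP' i t0).mp ht0mem with ⟨hP, _, _⟩ | ⟨hzz, _⟩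
                · exact ht0P hP
                · exact ht0z hzz)
      obtain ⟨cd1, hcd1e, hcd1⟩ := h1.defArcForced hxyAdj
      obtain ⟨σ, hσbij, hσ⟩ := exists_perm_one (cd1 x) (c2 z)
      have hglue := glue_mono hdisj hx1 hy1 hZ1sub hZ2sub hAdj
        (fun w => σ (cd1 w)) c2 (fun u w => u = v ∨ w = v)
        (by intro u w h' hn1' hn2' he
            rcases hcd1 u w h' (hσbij.injective he) with hh | hh
            · exact absurd hh hn1'
            · exact absurd hh hn2')
        (by intro u w h' hu hw he
            by_cases huv : u = v
            · exact Or.inl huv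
            · by_cases hwv : w = v
              · exact Or.inr hwv
              · exact False.elim (hprop2 u w h' huv hwv he))
        (by intro w hw he
            by_cases hwv : w = v
            · exact ⟨Or.inr hwv, Or.inl hwv⟩
            · exact False.elim (hprop2 z w (hZ1sub hw)
                (fun hh => hvz hh.symm) hwv (hσ.symm.trans he)))
        (by intro w hw he
            have he' : σ (cd1 x) = c2 w := by rw [hcd1e]; exact he
            by_cases hwv : w = v
            · exact ⟨Or.inr hwv, Or.inl hwv⟩
            · exact False.elim (hprop2 z w (hZ2sub hw)
                (fun hh => hvz hh.symm) hwv (hσ.symm.trans he')))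
      refine ⟨fun w => if w ∈ D2.verts then c2 w else σ (cd1 w), f, hfbij, ?_, ?_⟩
      · intro u w huw hune hwne hcc
        rcases hglue u w huw hcc with hh | hh
        · exact hune hh
        · exact hwne hh
      · intro i w hw hcc
        by_cases hwx' : w = x
        · have hcc' : σ (cd1 x) = f i := by
            rw [hwx'] at hcc
            simpa [if_neg hx2] using hcc
          have hzmem : z ∈ P' i := (hmemP' i z).mpr (Or.inr ⟨rfl, Or.inl (hwx' ▸ hw)⟩)
          exact hparts2 i z hzmem (hσ.symm.trans hcc')
        · by_cases hwy' : w = y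
          · have hcc' : σ (cd1 y) = f i := by
              rw [hwy'] at hcc
              simpa [if_neg hy2] using hcc
            have hcc'' : σ (cd1 x) = f i := by rw [hcd1e]; exact hcc'
            have hzmem : z ∈ P' i := (hmemP' i z).mpr (Or.inr ⟨rfl, Or.inr (hwy' ▸ hw)⟩)
            exact hparts2 i z hzmem (hσ.symm.trans hcc'')
          · have hD2 : D2.Adj v w := by
              rcases (hNv w).mp (hPsub i hw) with ⟨h, _⟩ | ⟨h', _⟩ | ⟨h', _⟩
              · exact h
              · exact absurd h' hwx'
              · exact absurd h' hwy'
            have hwV2 : w ∈ D2.verts := (D2.adj_mem hD2).2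
            have hcc' : c2 w = f i := by simpa [if_pos hwV2] using hcc
            exact hparts2 i w ((hmemP' i w).mpr (Or.inl ⟨hw, hwx', hwy'⟩)) hcc'

end OreAux
/-- every 4-Ore digraph is 4-dicritical. -/
theorem stmt_3 (D : Dgr) (h : IsOre4 D) : Dgr.Dicritical 4 D := by
  have hI : OreAux.Inv D := by
    induction h with
    | k4 D hD => exact OreAux.inv_base hD
    | comp D1 D2 D h1 h2 hC ih1 ih2 => exact OreAux.inv_comp ih1 ih2 hC
  exact hI.dicritical
end

section
/- Let D be a 4-dicritical bidirected digraph, v a vertex of D, and let (N1+, N2+) and (N1-, N2-) be two partitions of the neighbourhood of v. Let D' be obtained from D by splitting v into two vertices v1 and v2 with out-neighbourhoods N1+, N2+ and in-neighbourhoods N1-, N2- respectively. If D' is not bidirected (i.e., N1+ ≠ N1-), then D' admits a 3-dicolouring in which v1 and v2 receive the same colour. -/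
open Dgr

namespace Dgr

/-- `D'` is obtained from `D` by splitting the vertex `v` into `v1` (with
out-neighbourhood `N1p` and in-neighbourhood `N1m`) and `v2` (with
out-neighbourhood `N2p` and in-neighbourhood `N2m`). -/
def IsSplit (D : Dgr) (v v1 v2 : ℕ) (N1p N2p N1m N2m : Set ℕ) (D' : Dgr) : Prop :=
  v1 ≠ v2 ∧ v1 ∉ D.verts.erase v ∧ v2 ∉ D.verts.erase v ∧
  N1p ∪ N2p = {u | D.Adj v u} ∧ Disjoint N1p N2p ∧
  N1m ∪ N2m = {u | D.Adj u v} ∧ Disjoint N1m N2m ∧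
  D'.verts = (D.verts.erase v) ∪ {v1, v2} ∧
  (∀ u w, D'.Adj u w ↔
    (D.Adj u w ∧ u ≠ v ∧ w ≠ v) ∨
    (u = v1 ∧ w ∈ N1p) ∨ (u = v2 ∧ w ∈ N2p) ∨
    (w = v1 ∧ u ∈ N1m) ∨ (w = v2 ∧ u ∈ N2m))

end Dgr

section Aux

/-- a relation admitting a strictly monotone potential is acyclic -/
lemma acy_of_lt {R : ℕ → ℕ → Prop} (f : ℕ → ℕ) (h : ∀ u w, R u w → f u < f w) :
    Dgr.Acy R := by
  intro x hx
  have key : ∀ a b, Relation.TransGen R a b → f a < f b := by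
    intro a b hab
    induction hab with
    | single h' => exact h _ _ h'
    | tail _ h' ih => exact ih.trans (h _ _ h')
  exact lt_irrefl _ (key x x hx)

lemma dicol_mono (D : Dgr) {k k' : ℕ} (hk : k ≤ k') (h : D.Dicolourable k) :
    D.Dicolourable k' := by
  obtain ⟨φ, hφ⟩ := h
  refine ⟨fun x => Fin.castLE hk (φ x), fun x hx => hφ x (Relation.TransGen.mono ?_ x x hx)⟩
  intro a b hab
  exact ⟨hab.1, Fin.castLE_injective hk hab.2⟩

lemma acy_of_empty {R : ℕ → ℕ → Prop} (h : ∀ a b, ¬ R a b) : Dgr.Acy R := by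
  intro x hx
  have gen : ∀ a b, ¬ Relation.TransGen R a b := by
    intro a b hab
    induction hab with
    | single h' => exact h _ _ h'
    | tail _ h' _ => exact h _ _ h'
  exact gen x x hx

lemma dicol_exists (D : Dgr) : D.Dicolourable (D.nV + 1) := by
  classical
  refine ⟨fun x => if h : x ∈ D.verts then (D.verts.equivFin ⟨x, h⟩).castSucc
    else Fin.last _, ?_⟩
  apply acy_of_empty
  have key : ∀ a b, ¬ (D.Adj a b ∧
      (if h : a ∈ D.verts then (D.verts.equivFin ⟨a, h⟩).castSucc else Fin.last _) =
      (if h : b ∈ D.verts then (D.verts.equivFin ⟨b, h⟩).castSucc else Fin.last _)) := by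
    rintro a b ⟨hab, hc⟩
    obtain ⟨ha, hbm⟩ := D.adj_mem hab
    rw [dif_pos ha, dif_pos hbm] at hc
    have h1 := Fin.castSucc_injective _ hc
    have h2 := D.verts.equivFin.injective h1
    have : a = b := congrArg Subtype.val h2
    exact D.adj_irrefl a (this ▸ hab)
  exact key

/-- any proper subdigraph of a 4-dicritical digraph is 3-dicolourable -/
lemma subd_dicol3 (D : Dgr) (hD : Dgr.Dicritical 4 D) (H : Dgr)
    (hH : Dgr.ProperSubd H D) : H.Dicolourable 3 := by
  have hlt : H.dichr < 4 := hD.2 H hH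
  have hne : {k | H.Dicolourable k}.Nonempty := ⟨H.nV + 1, dicol_exists H⟩
  have hmem : H.Dicolourable H.dichr := Nat.sInf_mem hne
  exact dicol_mono H (by omega) hmem

/-- key colouring lemma: deleting a digon from a 4-dicritical bidirected digraph
yields a 3-colouring identifying its endpoints and proper elsewhere -/
lemma key_col (D : Dgr) (hb : D.Bidirected) (hD : Dgr.Dicritical 4 D)
    (u₀ v : ℕ) (huv : D.Adj u₀ v) :
    ∃ φ : ℕ → Fin 3, φ u₀ = φ v ∧
      ∀ a b, D.Adj a b → ¬(a = u₀ ∧ b = v) → ¬(a = v ∧ b = u₀) → φ a ≠ φ b := by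
  set H := D.delDigon u₀ v with hHdef
  have hsub : Dgr.ProperSubd H D := by
    constructor
    · exact ⟨subset_rfl, fun a b h => h.1⟩
    · intro h
      exact (h.2 huv).2.1 ⟨rfl, rfl⟩
  obtain ⟨φ, hφ⟩ := subd_dicol3 D hD H hsub
  have hD3 : ¬ D.Dicolourable 3 := by
    intro h3
    have h4 : D.dichr ≤ 3 := Nat.sInf_le h3
    rw [hD.1] at h4; omega
  have heq : φ u₀ = φ v := by
    by_contra hne
    apply hD3
    refine ⟨φ, fun x hx => hφ x (Relation.TransGen.mono ?_ x x hx)⟩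
    rintro a b ⟨hab, hc⟩
    refine ⟨⟨hab, ?_, ?_⟩, hc⟩
    · rintro ⟨rfl, rfl⟩; exact hne hc
    · rintro ⟨rfl, rfl⟩; exact hne hc.symm
  refine ⟨φ, heq, ?_⟩
  intro a b hab h1 h2 hc
  have hba : D.Adj b a := hb hab
  have hHab : H.Adj a b := ⟨hab, h1, h2⟩
  have hHba : H.Adj b a := by
    refine ⟨hba, ?_, ?_⟩
    · rintro ⟨rfl, rfl⟩; exact h2 ⟨rfl, rfl⟩
    · rintro ⟨rfl, rfl⟩; exact h1 ⟨rfl, rfl⟩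
  exact hφ a ((Relation.TransGen.single ⟨hHab, hc⟩).tail ⟨hHba, hc.symm⟩)

end Aux

/-- splitting a vertex of a 4-dicritical bidirected digraph into two
vertices yields a digraph with a 3-dicolouring giving both split vertices the
same colour, unless the result is bidirected (i.e. `N1p = N1m`). -/
theorem stmt_5 (D : Dgr) (hb : D.Bidirected) (hD : Dgr.Dicritical 4 D)
    (v v1 v2 : ℕ) (hv : v ∈ D.verts)
    (N1p N2p N1m N2m : Set ℕ) (D' : Dgr)
    (hsplit : D.IsSplit v v1 v2 N1p N2p N1m N2m D')
    (hnotbidir : N1p ≠ N1m) :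
    ∃ φ : ℕ → Fin 3, D'.IsDicol φ ∧ φ v1 = φ v2 := by
  classical
  obtain ⟨hne12, hv1, hv2, hNp, hdisjp, hNm, hdisjm, hverts, hadj⟩ := hsplit
  have hcases : (∃ u ∈ N1p, u ∉ N1m) ∨ (∃ u ∈ N1m, u ∉ N1p) := by
    by_contra hc
    push_neg at hc
    exact hnotbidir (Set.Subset.antisymm hc.1 hc.2)
  -- common facts about neighbours of v
  have hmemNp : ∀ u ∈ N1p ∪ N2p, D.Adj v u := fun u hu => by rwa [hNp] at hu
  have hmemNm : ∀ u ∈ N1m ∪ N2m, D.Adj u v := fun u hu => by rwa [hNm] at hu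
  -- facts about generic vertices distinct from v
  have hnotv1 : ∀ w, w ∈ D.verts → w ≠ v → w ≠ v1 :=
    fun w hw hwv h => hv1 (h ▸ Finset.mem_erase.2 ⟨hwv, hw⟩)
  have hnotv2 : ∀ w, w ∈ D.verts → w ≠ v → w ≠ v2 :=
    fun w hw hwv h => hv2 (h ▸ Finset.mem_erase.2 ⟨hwv, hw⟩)
  rcases hcases with ⟨u₀, hu1, hu2⟩ | ⟨u₀, hu1, hu2⟩
  · -- case A : u₀ ∈ N1p \ N1m, hence u₀ ∈ N2m
    have hvu : D.Adj v u₀ := hmemNp u₀ (Or.inl hu1)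
    have huv : D.Adj u₀ v := hb hvu
    have hu0v : u₀ ≠ v := fun h => D.adj_irrefl v (h ▸ hvu)
    have hu0m : u₀ ∈ D.verts := (D.adj_mem huv).1
    have hu0v1 : u₀ ≠ v1 := hnotv1 u₀ hu0m hu0v
    have hu0v2 : u₀ ≠ v2 := hnotv2 u₀ hu0m hu0v
    have hu2m : u₀ ∈ N2m := by
      have : u₀ ∈ N1m ∪ N2m := by
        rw [hNm]; exact huv
      rcases this with h | h
      · exact absurd h hu2
      · exact h
    obtain ⟨φ, hφeq, hφ⟩ := key_col D hb hD u₀ v huv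
    set ψ : ℕ → Fin 3 := fun x => if x = v1 then φ v else if x = v2 then φ v else φ x
      with hψdef
    have hψv1 : ψ v1 = φ v := if_pos rfl
    have hψv2 : ψ v2 = φ v := by
      simp [hψdef, Ne.symm hne12]
    have hψother : ∀ w, w ≠ v1 → w ≠ v2 → ψ w = φ w := by
      intro w h1 h2; simp only [hψdef, if_neg h1, if_neg h2]
    refine ⟨ψ, ?_, by rw [hψv1, hψv2]⟩
    apply acy_of_lt (fun x => if x = v1 then 0 else if x = u₀ then 1 else 2)
    rintro a b ⟨hab, hc⟩
    rw [hadj] at hab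
    rcases hab with ⟨hDab, hav, hbv⟩ | ⟨rfl, hbN⟩ | ⟨rfl, hbN⟩ | ⟨rfl, haN⟩ | ⟨rfl, haN⟩
    · -- internal arc: impossible (φ proper away from v)
      have ham := (D.adj_mem hDab).1
      have hbm := (D.adj_mem hDab).2
      rw [hψother a (hnotv1 a ham hav) (hnotv2 a ham hav),
          hψother b (hnotv1 b hbm hbv) (hnotv2 b hbm hbv)] at hc
      exact absurd hc (hφ a b hDab (fun h => hbv h.2) (fun h => hav h.1))
    · -- arc v1 → b with b ∈ N1p : forces b = u₀
      have hvb : D.Adj v b := hmemNp b (Or.inl hbN)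
      have hbvne : b ≠ v := fun h => D.adj_irrefl v (h ▸ hvb)
      have hbm := (D.adj_mem hvb).2
      rw [hψv1, hψother b (hnotv1 b hbm hbvne) (hnotv2 b hbm hbvne)] at hc
      have hbu : b = u₀ := by
        by_contra hbu
        exact hφ v b hvb (fun h => hu0v h.1.symm) (fun h => hbu h.2) hc
      subst hbu
      split_ifs <;> omega
    · -- arc v2 → b with b ∈ N2p : impossible
      have hvb : D.Adj v b := hmemNp b (Or.inr hbN)
      have hbvne : b ≠ v := fun h => D.adj_irrefl v (h ▸ hvb)
      have hbm := (D.adj_mem hvb).2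
      rw [hψv2, hψother b (hnotv1 b hbm hbvne) (hnotv2 b hbm hbvne)] at hc
      have hbu : b = u₀ := by
        by_contra hbu
        exact hφ v b hvb (fun h => hu0v h.1.symm) (fun h => hbu h.2) hc
      exact absurd (hbu ▸ hbN) (Set.disjoint_left.mp hdisjp hu1)
    · -- arc a → v1 with a ∈ N1m : impossible
      have hav : D.Adj a v := hmemNm a (Or.inl haN)
      have havne : a ≠ v := fun h => D.adj_irrefl v (h ▸ hav)
      have ham := (D.adj_mem hav).1
      rw [hψv1, hψother a (hnotv1 a ham havne) (hnotv2 a ham havne)] at hc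
      have hau : a = u₀ := by
        by_contra hau
        exact hφ a v hav (fun h => hau h.1) (fun h => havne h.1) hc
      exact absurd (hau ▸ haN) hu2
    · -- arc a → v2 with a ∈ N2m : forces a = u₀
      have hav : D.Adj a v := hmemNm a (Or.inr haN)
      have havne : a ≠ v := fun h => D.adj_irrefl v (h ▸ hav)
      have ham := (D.adj_mem hav).1
      rw [hψv2, hψother a (hnotv1 a ham havne) (hnotv2 a ham havne)] at hc
      have hau : a = u₀ := by
        by_contra hau
        exact hφ a v hav (fun h => hau h.1) (fun h => havne h.1) hc
      subst hau
      split_ifs <;> omega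
  · -- case B : u₀ ∈ N1m \ N1p, hence u₀ ∈ N2p (symmetric)
    have huv : D.Adj u₀ v := hmemNm u₀ (Or.inl hu1)
    have hvu : D.Adj v u₀ := hb huv
    have hu0v : u₀ ≠ v := fun h => D.adj_irrefl v (h ▸ hvu)
    have hu0m : u₀ ∈ D.verts := (D.adj_mem huv).1
    have hu0v1 : u₀ ≠ v1 := hnotv1 u₀ hu0m hu0v
    have hu0v2 : u₀ ≠ v2 := hnotv2 u₀ hu0m hu0v
    have hu2p : u₀ ∈ N2p := by
      have : u₀ ∈ N1p ∪ N2p := by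
        rw [hNp]; exact hvu
      rcases this with h | h
      · exact absurd h hu2
      · exact h
    obtain ⟨φ, hφeq, hφ⟩ := key_col D hb hD u₀ v huv
    set ψ : ℕ → Fin 3 := fun x => if x = v1 then φ v else if x = v2 then φ v else φ x
      with hψdef
    have hψv1 : ψ v1 = φ v := if_pos rfl
    have hψv2 : ψ v2 = φ v := by
      simp [hψdef, Ne.symm hne12]
    have hψother : ∀ w, w ≠ v1 → w ≠ v2 → ψ w = φ w := by
      intro w h1 h2; simp only [hψdef, if_neg h1, if_neg h2]
    refine ⟨ψ, ?_, by rw [hψv1, hψv2]⟩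
    apply acy_of_lt (fun x => if x = v2 then 0 else if x = u₀ then 1 else 2)
    rintro a b ⟨hab, hc⟩
    rw [hadj] at hab
    rcases hab with ⟨hDab, hav, hbv⟩ | ⟨rfl, hbN⟩ | ⟨rfl, hbN⟩ | ⟨rfl, haN⟩ | ⟨rfl, haN⟩
    · have ham := (D.adj_mem hDab).1
      have hbm := (D.adj_mem hDab).2
      rw [hψother a (hnotv1 a ham hav) (hnotv2 a ham hav),
          hψother b (hnotv1 b hbm hbv) (hnotv2 b hbm hbv)] at hc
      exact absurd hc (hφ a b hDab (fun h => hbv h.2) (fun h => hav h.1))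
    · -- arc v1 → b with b ∈ N1p : impossible
      have hvb : D.Adj v b := hmemNp b (Or.inl hbN)
      have hbvne : b ≠ v := fun h => D.adj_irrefl v (h ▸ hvb)
      have hbm := (D.adj_mem hvb).2
      rw [hψv1, hψother b (hnotv1 b hbm hbvne) (hnotv2 b hbm hbvne)] at hc
      have hbu : b = u₀ := by
        by_contra hbu
        exact hφ v b hvb (fun h => hu0v h.1.symm) (fun h => hbu h.2) hc
      exact absurd (hbu ▸ hbN) hu2
    · -- arc v2 → b with b ∈ N2p : forces b = u₀
      have hvb : D.Adj v b := hmemNp b (Or.inr hbN)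
      have hbvne : b ≠ v := fun h => D.adj_irrefl v (h ▸ hvb)
      have hbm := (D.adj_mem hvb).2
      rw [hψv2, hψother b (hnotv1 b hbm hbvne) (hnotv2 b hbm hbvne)] at hc
      have hbu : b = u₀ := by
        by_contra hbu
        exact hφ v b hvb (fun h => hu0v h.1.symm) (fun h => hbu h.2) hc
      subst hbu
      split_ifs <;> omega
    · -- arc a → v1 with a ∈ N1m : forces a = u₀
      have hav : D.Adj a v := hmemNm a (Or.inl haN)
      have havne : a ≠ v := fun h => D.adj_irrefl v (h ▸ hav)
      have ham := (D.adj_mem hav).1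
      rw [hψv1, hψother a (hnotv1 a ham havne) (hnotv2 a ham havne)] at hc
      have hau : a = u₀ := by
        by_contra hau
        exact hφ a v hav (fun h => hau h.1) (fun h => havne h.1) hc
      subst hau
      split_ifs <;> omega
    · -- arc a → v2 with a ∈ N2m : impossible
      have hav : D.Adj a v := hmemNm a (Or.inr haN)
      have havne : a ≠ v := fun h => D.adj_irrefl v (h ▸ hav)
      have ham := (D.adj_mem hav).1
      rw [hψv2, hψother a (hnotv1 a ham havne) (hnotv2 a ham havne)] at hc
      have hau : a = u₀ := by
        by_contra hau
        exact hφ a v hav (fun h => hau h.1) (fun h => havne h.1) hc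
      exact absurd (hau ▸ haN) (Set.disjoint_left.mp hdisjm hu1)
end

section
/- If D is a 4-Ore digraph and v is a vertex of D, then D contains either an Ore-collapsible induced subdigraph disjoint from v, or an emerald disjoint from v. -/
open Dgr

open Dgr

private lemma dgr_ext {A B : Dgr} (h1 : A.verts = B.verts) (h2 : A.Adj = B.Adj) : A = B := by
  cases A; cases B; simp_all

private lemma bidir_of_complete {D : Dgr} {n : ℕ} (h : D.IsBidirComplete n) : D.Bidirected := by
  intro u v huv
  obtain ⟨hu, hv⟩ := D.adj_mem huv
  have hne : u ≠ v := fun e => D.adj_irrefl u (e ▸ huv)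
  exact h.2 v hv u hu hne.symm

private lemma deg_bidir {D : Dgr} (h : D.Bidirected) (v : ℕ) :
    D.deg v = 2 * {u | D.Adj v u}.ncard := by
  have he : {u | D.Adj u v} = {u | D.Adj v u} :=
    Set.ext fun u => ⟨fun h' => h h', fun h' => h h'⟩
  rw [Dgr.deg, he]; ring

private lemma base_case {D : Dgr} (hK4 : D.IsBidirComplete 4) {v : ℕ} (hv : v ∈ D.verts) :
    ∃ s : Finset ℕ, D.IsEmerald s ∧ v ∉ s := by
  refine ⟨D.verts.erase v, ⟨?_, Finset.erase_subset _ _, ?_, ?_⟩, Finset.notMem_erase v _⟩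
  · rw [Finset.card_erase_of_mem hv, hK4.1]
  · intro a ha b hb hab
    exact hK4.2 a (Finset.mem_of_mem_erase ha) b (Finset.mem_of_mem_erase hb) hab
  · intro w hw
    rw [deg_bidir (bidir_of_complete hK4)]
    have hwv : w ∈ D.verts := Finset.mem_of_mem_erase hw
    have hset : {u | D.Adj w u} = ↑(D.verts.erase w) := by
      ext u
      simp only [Set.mem_setOf_eq, Finset.coe_erase, Set.mem_diff, Finset.mem_coe,
        Set.mem_singleton_iff]
      constructor
      · intro h'
        exact ⟨(D.adj_mem h').2, fun e => D.adj_irrefl w (e ▸ h')⟩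
      · rintro ⟨hu, hne⟩
        exact hK4.2 w hwv u hu (Ne.symm hne)
    rw [hset, Set.ncard_coe_finset, Finset.card_erase_of_mem hwv, hK4.1]
private lemma comp_case {D1 D2 D : Dgr} (h1 : IsOre4 D1) (hcomp : IsOreComp D1 D2 D)
    (ih2 : ∀ w ∈ D2.verts,
      (∃ S : Finset ℕ, D2.OreCollapsible S ∧ w ∉ S) ∨
      (∃ s : Finset ℕ, D2.IsEmerald s ∧ w ∉ s))
    {v : ℕ} (hv : v ∈ D.verts) :
    (∃ S : Finset ℕ, D.OreCollapsible S ∧ v ∉ S) ∨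
    (∃ s : Finset ℕ, D.IsEmerald s ∧ v ∉ s) := by
  classical
  obtain ⟨hb1, hb2, hdisj, x, y, z, Z1, Z2, hx1, hy1, hxy, hAxy, hz2, hZ, hZdisj,
    ⟨w1, hw1⟩, ⟨w2, hw2⟩, hV, hA⟩ := hcomp
  -- basic membership facts
  have hD1sub : D1.verts ⊆ D.verts := by rw [hV]; exact Finset.subset_union_left
  have hZ1adj : ∀ w ∈ Z1, D2.Adj z w := fun w hw => by
    have : w ∈ Z1 ∪ Z2 := Or.inl hw
    rwa [hZ] at this
  have hZ2adj : ∀ w ∈ Z2, D2.Adj z w := fun w hw => by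
    have : w ∈ Z1 ∪ Z2 := Or.inr hw
    rwa [hZ] at this
  have hZmem : ∀ w, w ∈ Z1 ∪ Z2 ↔ D2.Adj z w := fun w => by rw [hZ]; rfl
  have hZ1m : ∀ w ∈ Z1, w ∈ D2.verts := fun w hw => (D2.adj_mem (hZ1adj w hw)).2
  have hZ2m : ∀ w ∈ Z2, w ∈ D2.verts := fun w hw => (D2.adj_mem (hZ2adj w hw)).2
  have hnd : ∀ a, a ∈ D1.verts → a ∈ D2.verts → False := fun a h1 h2 =>
    Finset.disjoint_left.1 hdisj h1 h2
  have hxD2 : x ∉ D2.verts := fun h => hnd x hx1 h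
  have hyD2 : y ∉ D2.verts := fun h => hnd y hy1 h
  have hw1ne : w1 ≠ z := fun e => D2.adj_irrefl z (e ▸ hZ1adj w1 hw1)
  have hw2ne : w2 ≠ z := fun e => D2.adj_irrefl z (e ▸ hZ2adj w2 hw2)
  have herase_sub : D2.verts.erase z ⊆ D.verts := by rw [hV]; exact Finset.subset_union_right
  have hw1D : w1 ∈ D.verts := herase_sub (Finset.mem_erase.2 ⟨hw1ne, hZ1m w1 hw1⟩)
  have hw2D : w2 ∈ D.verts := herase_sub (Finset.mem_erase.2 ⟨hw2ne, hZ2m w2 hw2⟩)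
  have hw1D1 : w1 ∉ D1.verts := fun h => hnd w1 h (hZ1m w1 hw1)
  -- D is bidirected
  have hDbi : D.Bidirected := by
    intro a b hab
    rw [hA] at hab ⊢
    rcases hab with ⟨h', hn1, hn2⟩ | ⟨h', ha, hb⟩ | ⟨rfl, hb, h'⟩ | ⟨rfl, ha, h'⟩ |
      ⟨rfl, hb, h'⟩ | ⟨rfl, ha, h'⟩
    · exact Or.inl ⟨hb1 h', fun ⟨e1, e2⟩ => hn2 ⟨e2, e1⟩, fun ⟨e1, e2⟩ => hn1 ⟨e2, e1⟩⟩
    · exact Or.inr (Or.inl ⟨hb2 h', hb, ha⟩)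
    · exact Or.inr (Or.inr (Or.inr (Or.inl ⟨rfl, hb, hb2 h'⟩)))
    · exact Or.inr (Or.inr (Or.inl ⟨rfl, ha, hb2 h'⟩))
    · exact Or.inr (Or.inr (Or.inr (Or.inr (Or.inr ⟨rfl, hb, hb2 h'⟩))))
    · exact Or.inr (Or.inr (Or.inr (Or.inr (Or.inl ⟨rfl, ha, hb2 h'⟩))))
  by_cases hvD1 : v ∈ D1.verts
  · -- v is on the digon side: use IH on D2 at z and transfer
    rcases ih2 z hz2 with ⟨S, ⟨hSsub, _, u', v', huv, hbd, hOre⟩, hzS⟩ | ⟨s, hs, hzs⟩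
    · -- transfer Ore-collapsible S
      left
      have hSz : ∀ a ∈ S, a ≠ z := fun a ha e => hzS (e ▸ ha)
      have hSD : S ⊆ D.verts := fun a ha =>
        herase_sub (Finset.mem_erase.2 ⟨hSz a ha, hSsub ha⟩)
      have hSD1 : ∀ a ∈ S, a ∉ D1.verts := fun a ha h => hnd a h (hSsub ha)
      -- adjacency inside S agrees between D and D2
      have hadjS : ∀ a b : ℕ, a ∈ S → b ∈ S → (D.Adj a b ↔ D2.Adj a b) := by
        intro a b ha hb
        constructor
        · intro h'
          rw [hA] at h'
          rcases h' with ⟨h', _, _⟩ | ⟨h', _, _⟩ | ⟨rfl, hb', h'⟩ | ⟨rfl, ha', h'⟩ |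
            ⟨rfl, hb', h'⟩ | ⟨rfl, ha', h'⟩
          · exact absurd (D1.adj_mem h').1 (hSD1 a ha)
          · exact h'
          · exact absurd (hSsub ha) hxD2
          · exact absurd (hSsub hb) hxD2
          · exact absurd (hSsub ha) hyD2
          · exact absurd (hSsub hb) hyD2
        · intro h'
          rw [hA]
          exact Or.inr (Or.inl ⟨h', hSz a ha, hSz b hb⟩)
      have hind : D.induce S = D2.induce S := by
        apply dgr_ext
        · show D.verts ∩ S = D2.verts ∩ S
          rw [Finset.inter_eq_right.2 hSD, Finset.inter_eq_right.2 hSsub]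
        · funext a b
          show (D.Adj a b ∧ a ∈ S ∧ b ∈ S) = (D2.Adj a b ∧ a ∈ S ∧ b ∈ S)
          apply propext
          constructor
          · rintro ⟨h', ha, hb⟩; exact ⟨(hadjS a b ha hb).1 h', ha, hb⟩
          · rintro ⟨h', ha, hb⟩; exact ⟨(hadjS a b ha hb).2 h', ha, hb⟩
      have hbdeq : D.bdry S = D2.bdry S := by
        ext a
        simp only [Dgr.bdry, Set.mem_setOf_eq]
        constructor
        · rintro ⟨haS, u, huD, huS, hedge⟩
          refine ⟨haS, ?_⟩
          have hadj : D.Adj a u := by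
            rcases hedge with h' | h'
            · exact hDbi h'
            · exact h'
          rw [hA] at hadj
          rcases hadj with ⟨h', _, _⟩ | ⟨h', _, hu'⟩ | ⟨rfl, hb', h'⟩ | ⟨rfl, ha', h'⟩ |
            ⟨rfl, hb', h'⟩ | ⟨rfl, ha', h'⟩
          · exact absurd (D1.adj_mem h').1 (hSD1 a haS)
          · exact ⟨u, (D2.adj_mem h').2, huS, Or.inr h'⟩
          · exact absurd (hSsub haS) hxD2
          · exact ⟨z, hz2, hzS, Or.inr h'⟩
          · exact absurd (hSsub haS) hyD2
          · exact ⟨z, hz2, hzS, Or.inr h'⟩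
        · rintro ⟨haS, u, huD2, huS, hedge⟩
          refine ⟨haS, ?_⟩
          have hadj : D2.Adj a u := by
            rcases hedge with h' | h'
            · exact hb2 h'
            · exact h'
          by_cases huz : u = z
          · subst huz
            have : a ∈ Z1 ∪ Z2 := (hZmem a).2 (hb2 hadj)
            rcases this with haZ | haZ
            · exact ⟨x, hD1sub hx1, fun h => hxD2 (hSsub h), Or.inr (by
                rw [hA]; exact Or.inr (Or.inr (Or.inr (Or.inl ⟨rfl, haZ, hadj⟩))))⟩
            · exact ⟨y, hD1sub hy1, fun h => hyD2 (hSsub h), Or.inr (by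
                rw [hA]; exact Or.inr (Or.inr (Or.inr (Or.inr (Or.inr ⟨rfl, haZ, hadj⟩)))))⟩
          · refine ⟨u, herase_sub (Finset.mem_erase.2 ⟨huz, huD2⟩), huS, Or.inr ?_⟩
            rw [hA]
            exact Or.inr (Or.inl ⟨hadj, hSz a haS, huz⟩)
      refine ⟨S, ⟨hSD, ?_, u', v', huv, by rw [hbdeq]; exact hbd, by rw [hind]; exact hOre⟩,
        fun h => hnd v hvD1 (hSsub h)⟩
      · exact Finset.card_lt_card ⟨hSD, fun hsub =>
          hxD2 (hSsub (hsub (hD1sub hx1)))⟩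
    · -- transfer emerald s
      right
      obtain ⟨hcard, hssub, hadj, hdeg⟩ := hs
      have hsz : ∀ a ∈ s, a ≠ z := fun a ha e => hzs (e ▸ ha)
      have hsD : s ⊆ D.verts := fun a ha =>
        herase_sub (Finset.mem_erase.2 ⟨hsz a ha, hssub ha⟩)
      have hsD1 : ∀ a ∈ s, a ∉ D1.verts := fun a ha h => hnd a h (hssub ha)
      refine ⟨s, ⟨hcard, hsD, ?_, ?_⟩, fun h => hnd v hvD1 (hssub h)⟩
      · intro a ha b hb hab
        rw [hA]
        exact Or.inr (Or.inl ⟨hadj a ha b hb hab, hsz a ha, hsz b hb⟩)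
      · intro w hw
        have hwz : w ≠ z := hsz w hw
        have hwD2 : w ∈ D2.verts := hssub hw
        have hwD1 : w ∉ D1.verts := hsD1 w hw
        have hwx : w ≠ x := fun e => hxD2 (e ▸ hwD2)
        have hwy : w ≠ y := fun e => hyD2 (e ▸ hwD2)
        rw [deg_bidir hDbi]
        have hd2 : D2.deg w = 6 := hdeg w hw
        rw [deg_bidir hb2] at hd2
        -- bijection f
        set f : ℕ → ℕ := fun u => if u = z then (if w ∈ Z1 then x else y) else u with hf
        have hfz : f z = if w ∈ Z1 then x else y := by simp [hf]
        have himg : {u | D.Adj w u} = f '' {u | D2.Adj w u} := by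
          ext u
          simp only [Set.mem_setOf_eq, Set.mem_image]
          constructor
          · intro h'
            rw [hA] at h'
            rcases h' with ⟨h', _, _⟩ | ⟨h', _, huz⟩ | ⟨e, hb', h'⟩ | ⟨rfl, ha', h'⟩ |
              ⟨e, hb', h'⟩ | ⟨rfl, ha', h'⟩
            · exact absurd (D1.adj_mem h').1 hwD1
            · exact ⟨u, h', by simp [hf, huz]⟩
            · exact absurd e hwx
            · exact ⟨z, h', by rw [hfz, if_pos ha']⟩
            · exact absurd e hwy
            · have : w ∉ Z1 := fun h => (Set.disjoint_left.1 hZdisj h) ha'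
              exact ⟨z, h', by rw [hfz, if_neg this]⟩
          · rintro ⟨c, hc, rfl⟩
            rw [hA]
            by_cases hcz : c = z
            · rw [hcz] at hc
              have hwczz : D2.Adj z w := hb2 hc
              have hm : w ∈ Z1 ∪ Z2 := (hZmem w).2 hwczz
              rcases hm with haZ | haZ
              · rw [hcz, hfz, if_pos haZ]
                exact Or.inr (Or.inr (Or.inr (Or.inl ⟨rfl, haZ, hc⟩)))
              · have hnZ1 : w ∉ Z1 := fun h => (Set.disjoint_left.1 hZdisj h) haZ
                rw [hcz, hfz, if_neg hnZ1]
                exact Or.inr (Or.inr (Or.inr (Or.inr (Or.inr ⟨rfl, haZ, hc⟩))))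
            · have : f c = c := by simp [hf, hcz]
              rw [this]
              exact Or.inr (Or.inl ⟨hc, hwz, hcz⟩)
        have hinjOn : Set.InjOn f {u | D2.Adj w u} := by
          intro a ha b hb hab
          have haD2 : a ∈ D2.verts := (D2.adj_mem ha).2
          have hbD2 : b ∈ D2.verts := (D2.adj_mem hb).2
          by_cases haz : a = z <;> by_cases hbz : b = z
          · rw [haz, hbz]
          · exfalso
            have : f a = if w ∈ Z1 then x else y := by rw [haz, hfz]
            rw [this] at hab
            have hfb : f b = b := by simp [hf, hbz]
            rw [hfb] at hab
            by_cases hwZ : w ∈ Z1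
            · rw [if_pos hwZ] at hab; exact hxD2 (hab ▸ hbD2)
            · rw [if_neg hwZ] at hab; exact hyD2 (hab ▸ hbD2)
          · exfalso
            have : f b = if w ∈ Z1 then x else y := by rw [hbz, hfz]
            rw [this] at hab
            have hfa : f a = a := by simp [hf, haz]
            rw [hfa] at hab
            by_cases hwZ : w ∈ Z1
            · rw [if_pos hwZ] at hab; exact hxD2 (hab ▸ haD2)
            · rw [if_neg hwZ] at hab; exact hyD2 (hab ▸ haD2)
          · have hfa : f a = a := by simp [hf, haz]
            have hfb : f b = b := by simp [hf, hbz]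
            rw [hfa, hfb] at hab; exact hab
        rw [himg, Set.ncard_image_of_injOn hinjOn]
        omega
  · -- v is on the split side: D1.verts is Ore-collapsible and avoids v
    left
    refine ⟨D1.verts, ⟨hD1sub, ?_, x, y, hxy, ?_, ?_⟩, hvD1⟩
    · exact Finset.card_lt_card ⟨hD1sub, fun hsub => hw1D1 (hsub hw1D)⟩
    · -- boundary is {x, y}
      ext a
      simp only [Dgr.bdry, Set.mem_setOf_eq, Set.mem_insert_iff, Set.mem_singleton_iff]
      constructor
      · rintro ⟨haS, u, huD, huS, hedge⟩
        have hadj : D.Adj a u := by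
          rcases hedge with h' | h'
          · exact hDbi h'
          · exact h'
        rw [hA] at hadj
        rcases hadj with ⟨h', _, _⟩ | ⟨h', _, _⟩ | ⟨rfl, _, _⟩ | ⟨rfl, ha', _⟩ |
          ⟨rfl, _, _⟩ | ⟨rfl, ha', _⟩
        · exact absurd (D1.adj_mem h').2 huS
        · exact absurd (D2.adj_mem h').1 (hnd a haS)
        · exact Or.inl rfl
        · exact absurd (hZ1m a ha') (hnd a haS)
        · exact Or.inr rfl
        · exact absurd (hZ2m a ha') (hnd a haS)
      · rintro (rfl | rfl)
        · refine ⟨hx1, w1, hw1D, hw1D1, Or.inr ?_⟩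
          rw [hA]
          exact Or.inr (Or.inr (Or.inl ⟨rfl, hw1, hZ1adj w1 hw1⟩))
        · refine ⟨hy1, w2, hw2D, fun h => hnd w2 h (hZ2m w2 hw2), Or.inr ?_⟩
          rw [hA]
          exact Or.inr (Or.inr (Or.inr (Or.inr (Or.inl ⟨rfl, hw2, hZ2adj w2 hw2⟩))))
    · -- the induced+digon graph is D1
      have heq : (D.induce D1.verts).addDigon x y = D1 := by
        apply dgr_ext
        · show D.verts ∩ D1.verts = D1.verts
          exact Finset.inter_eq_right.2 hD1sub
        · funext a b
          apply propext
          show (D.Adj a b ∧ a ∈ D1.verts ∧ b ∈ D1.verts) ∨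
            (x ≠ y ∧ x ∈ D.verts ∩ D1.verts ∧ y ∈ D.verts ∩ D1.verts ∧
              ((a = x ∧ b = y) ∨ (a = y ∧ b = x))) ↔ D1.Adj a b
          constructor
          · rintro (⟨h', ha, hb⟩ | ⟨_, _, _, ⟨rfl, rfl⟩ | ⟨rfl, rfl⟩⟩)
            · rw [hA] at h'
              rcases h' with ⟨h', _, _⟩ | ⟨h', _, _⟩ | ⟨rfl, hb', _⟩ | ⟨rfl, ha', _⟩ |
                ⟨rfl, hb', _⟩ | ⟨rfl, ha', _⟩
              · exact h'
              · exact absurd (D2.adj_mem h').1 (hnd a ha)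
              · exact absurd (hZ1m b hb') (hnd b hb)
              · exact absurd (hZ1m a ha') (hnd a ha)
              · exact absurd (hZ2m b hb') (hnd b hb)
              · exact absurd (hZ2m a ha') (hnd a ha)
            · exact hAxy
            · exact hb1 hAxy
          · intro h'
            obtain ⟨ha, hb⟩ := D1.adj_mem h'
            by_cases hdig : (a = x ∧ b = y) ∨ (a = y ∧ b = x)
            · exact Or.inr ⟨hxy, Finset.mem_inter.2 ⟨hD1sub hx1, hx1⟩,
                Finset.mem_inter.2 ⟨hD1sub hy1, hy1⟩, hdig⟩
            · refine Or.inl ⟨?_, ha, hb⟩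
              rw [hA]
              exact Or.inl ⟨h', fun h => hdig (Or.inl h), fun h => hdig (Or.inr h)⟩
      rw [heq]
      exact h1
private lemma main_aux (D : Dgr) (h : IsOre4 D) : ∀ v ∈ D.verts,
    (∃ S : Finset ℕ, D.OreCollapsible S ∧ v ∉ S) ∨
    (∃ s : Finset ℕ, D.IsEmerald s ∧ v ∉ s) := by
  induction h with
  | k4 D hK4 => exact fun v hv => Or.inr (base_case hK4 hv)
  | comp D1 D2 D h1 h2 hc ih1 ih2 => exact fun v hv => comp_case h1 hc ih2 hv

/-- a 4-Ore digraph contains, for every vertex `v`, an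
Ore-collapsible subdigraph or an emerald disjoint from `v`. -/
theorem stmt_6 (D : Dgr) (h : IsOre4 D) (v : ℕ) (hv : v ∈ D.verts) :
    (∃ S : Finset ℕ, D.OreCollapsible S ∧ v ∉ S) ∨
    (∃ s : Finset ℕ, D.IsEmerald s ∧ v ∉ s) :=
  main_aux D h v hv
end
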